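/- arXiv:1607.03836 — 7 statements merged into one kernel-verified Lean document; each statement's English description precedes it below -/
import Mathlib

section
/- Let α = (α₁, ..., αₙ) be a nonincreasing sequence of positive integers with even sum. If n ≥ (α₁ + αₙ + 1)² / (4·αₙ), then α is graphic. -/
open Finset
set_option linter.unusedSectionVars false

section Extend
variable {m : ℕ} (G : SimpleGraph (Fin m)) [DecidableRel G.Adj] (S : Finset (Fin m))

/-- Add a new hub vertex `0` joined to (the successors of) `S`. -/
def extGraph : SimpleGraph (Fin (m + 1)) where
  Adj a b := Fin.cases (Fin.cases False (fun j => j ∈ S) b)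
      (fun i => Fin.cases (i ∈ S) (fun j => G.Adj i j) b) a
  symm := by
    refine ⟨fun a b => ?_⟩
    induction a using Fin.cases <;> induction b using Fin.cases <;>
      simp only [Fin.cases_zero, Fin.cases_succ] <;> intro h
    · exact h.elim
    · exact h
    · exact h
    · exact G.adj_symm h
  loopless := by
    refine ⟨fun a => ?_⟩
    induction a using Fin.cases <;>
      simp only [Fin.cases_zero, Fin.cases_succ]
    · exact not_false
    · exact G.irrefl

instance extGraph.adjDecidable : DecidableRel (extGraph G S).Adj := by
  intro a b
  unfold extGraph
  induction a using Fin.cases <;> induction b using Fin.cases <;>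
    simp only [Fin.cases_zero, Fin.cases_succ] <;> infer_instance

@[simp] lemma extGraph_adj_zero_succ (j : Fin m) : (extGraph G S).Adj 0 j.succ ↔ j ∈ S := by
  simp [extGraph]

@[simp] lemma extGraph_adj_succ_zero (i : Fin m) : (extGraph G S).Adj i.succ 0 ↔ i ∈ S := by
  simp [extGraph]

@[simp] lemma extGraph_adj_succ_succ (i j : Fin m) :
    (extGraph G S).Adj i.succ j.succ ↔ G.Adj i j := by
  simp [extGraph]

lemma extGraph_degree_zero : (extGraph G S).degree 0 = S.card := by
  rw [← SimpleGraph.card_neighborFinset_eq_degree]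
  have : (extGraph G S).neighborFinset 0 = univ.filter (fun x => (extGraph G S).Adj 0 x) := by
    ext x; simp [SimpleGraph.mem_neighborFinset]
  rw [this, Fin.card_filter_univ_succ']
  simp only [SimpleGraph.irrefl, if_false]
  have : (univ.filter fun x : Fin m => (extGraph G S).Adj 0 x.succ) = S := by
    ext x; simp
  rw [this]; ring

lemma extGraph_degree_succ (i : Fin m) :
    (extGraph G S).degree i.succ = G.degree i + (if i ∈ S then 1 else 0) := by
  rw [← SimpleGraph.card_neighborFinset_eq_degree, ← SimpleGraph.card_neighborFinset_eq_degree]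
  have h1 : (extGraph G S).neighborFinset i.succ
      = univ.filter (fun x => (extGraph G S).Adj i.succ x) := by
    ext x; simp [SimpleGraph.mem_neighborFinset]
  have h2 : G.neighborFinset i = univ.filter (fun x => G.Adj i x) := by
    ext x; simp [SimpleGraph.mem_neighborFinset]
  rw [h1, h2, Fin.card_filter_univ_succ']
  have : (univ.filter fun x : Fin m => (extGraph G S).Adj i.succ x.succ)
      = univ.filter (fun x => G.Adj i x) := by
    ext x; simp
  rw [this]
  simp only [extGraph_adj_succ_zero]
  omega

end Extend


def egL (α : ℕ → ℕ) (k : ℕ) : ℕ := ∑ i ∈ range k, α i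
def egF (n : ℕ) (α : ℕ → ℕ) (k : ℕ) : ℕ := k * (k - 1) + ∑ i ∈ Ico k n, min k (α i)
def egOK (n : ℕ) (α : ℕ → ℕ) : Prop := ∀ k, 1 ≤ k → k ≤ n → egL α k ≤ egF n α k

lemma prefix_mem {n : ℕ} (S : Finset ℕ) (hS : S ⊆ range n)
    (hdc : ∀ i j : ℕ, i ≤ j → j ∈ S → i ∈ S) (i : ℕ) : i ∈ S ↔ i < S.card := by
  constructor
  · intro hi
    have hsub : range (i + 1) ⊆ S := fun j hj =>
      hdc j i (Nat.lt_succ_iff.mp (mem_range.mp hj)) hi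
    have := card_le_card hsub
    simpa using this
  · intro hi
    by_contra hni
    have hsub : S ⊆ range i := by
      intro j hj
      refine mem_range.mpr ?_
      by_contra h
      exact hni (hdc i j (le_of_not_gt h) hj)
    have := card_le_card hsub
    simp only [card_range] at this
    omega

lemma durfee {n : ℕ} {α : ℕ → ℕ} (hα : Antitone α)
    (h : ∀ k, 1 ≤ k → k ≤ n → k ≤ α (k - 1) → egL α k ≤ egF n α k) : egOK n α := by
  intro k
  induction k with
  | zero => omega
  | succ k ih =>
    intro _ hkn
    by_cases hd : k + 1 ≤ α k
    · exact h (k + 1) (by omega) hkn (by simpa using hd)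
    push_neg at hd
    rcases Nat.eq_zero_or_pos k with rfl | hk
    · -- α 0 = 0
      have h0 : α 0 = 0 := by omega
      have : egL α 1 = 0 := by simp [egL, h0]
      rw [this]; exact Nat.zero_le _
    have ihk : egL α k ≤ egF n α k := ih hk (by omega)
    have hL : egL α (k + 1) = egL α k + α k := by
      simp [egL, Finset.sum_range_succ]
    have hsplit : ∑ i ∈ Ico k n, min k (α i)
        = min k (α k) + ∑ i ∈ Ico (k + 1) n, min k (α i) :=
      Finset.sum_eq_sum_Ico_succ_bot (by omega) _
    have hmins : ∀ i ∈ Ico (k + 1) n, min k (α i) = min (k + 1) (α i) := by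
      intro i hi
      have : α i ≤ α k := hα (by simp at hi; omega)
      omega
    have hFs : egF n α (k + 1) + α k = egF n α k + 2 * k := by
      rw [egF, egF, hsplit, Finset.sum_congr rfl hmins]
      have : min k (α k) = α k := by omega
      have hq : (k + 1) * (k + 1 - 1) = k * (k - 1) + 2 * k := by
        cases k with
        | zero => omega
        | succ m => simp [Nat.succ_sub_one]; ring
      omega
    omega


lemma shift_sum (f : ℕ → ℕ) (a b : ℕ) :
    ∑ i ∈ Ico (a + 1) (b + 1), f i = ∑ j ∈ Ico a b, f (j + 1) := by
  rw [Finset.sum_Ico_eq_sum_range, Finset.sum_Ico_eq_sum_range]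
  simp only [Nat.add_sub_add_right]
  exact Finset.sum_congr rfl fun i _ => by ring_nf

lemma shift_sum1 (f : ℕ → ℕ) (b : ℕ) :
    ∑ i ∈ Ico 1 (b + 1), f i = ∑ j ∈ range b, f (j + 1) := by
  have h := shift_sum f 0 b
  rw [show (0 : ℕ) + 1 = 1 from rfl, Nat.Ico_zero_eq_range] at h
  exact h

lemma keyineq (c e f : ℕ) (hkey : 1 ≤ c * f + e * f + c) :
    (c + 1 + e) + c * (c + 1 + e) + (1 + f) * (c + f + 1) ≤
      (c + f + 1) * (c + f) + (1 + e) * (c + f + 1) + 2 * c := by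
  nlinarith [hkey]

def redSeq (α : ℕ → ℕ) (T : Finset ℕ) : ℕ → ℕ :=
  fun j => if j + 1 ∈ T then α (j + 1) - 1 else α (j + 1)

lemma reduction {n : ℕ} {α : ℕ → ℕ} (hα : Antitone α) (h0 : ∀ i, n + 1 ≤ i → α i = 0)
    (heg : egOK (n + 1) α) (heven : Even (∑ i ∈ range (n + 1), α i)) (hs : 1 ≤ α 0) :
    ∃ T : Finset ℕ, T ⊆ Ico 1 (n + 1) ∧ T.card = α 0 ∧
      (∀ j, redSeq α T j + (if j + 1 ∈ T then 1 else 0) = α (j + 1)) ∧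
      Antitone (redSeq α T) ∧ (∀ j, n ≤ j → redSeq α T j = 0) ∧
      Even (∑ j ∈ range n, redSeq α T j) ∧ egOK n (redSeq α T) := by
  set s := α 0 with hs0
  have hEG1 := heg 1 (le_refl 1) (by omega)
  have hsn : s ≤ n := by
    have h1 : egF (n + 1) α 1 = ∑ i ∈ Ico 1 (n + 1), min 1 (α i) := by simp [egF]
    have h2 : egL α 1 = s := by simp [egL, hs0]
    have h3 : ∑ i ∈ Ico 1 (n + 1), min 1 (α i) ≤ (Ico 1 (n + 1)).card • 1 :=
      Finset.sum_le_card_nsmul _ _ _ (fun i _ => by omega)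
    simp only [Nat.card_Ico, smul_eq_mul, mul_one] at h3
    omega
  set v := α s with hv0
  have hv1 : 1 ≤ v := by
    by_contra hv
    have hz : ∀ i, s ≤ i → α i = 0 := fun i hi => by
      have := hα hi; omega
    have h1 : egF (n + 1) α 1 = ∑ i ∈ Ico 1 (n + 1), min 1 (α i) := by simp [egF]
    have h2 : egL α 1 = s := by simp [egL, hs0]
    have hsplit : ∑ i ∈ Ico 1 (n + 1), min 1 (α i)
        = ∑ i ∈ Ico 1 s, min 1 (α i) + ∑ i ∈ Ico s (n + 1), min 1 (α i) :=
      (Finset.sum_Ico_consecutive _ (by omega) (by omega)).symm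
    have hz2 : ∑ i ∈ Ico s (n + 1), min 1 (α i) = 0 :=
      Finset.sum_eq_zero fun i hi => by
        rw [hz i (mem_Ico.mp hi).1]; rfl
    have hb : ∑ i ∈ Ico 1 s, min 1 (α i) ≤ (Ico 1 s).card • 1 :=
      Finset.sum_le_card_nsmul _ _ _ (fun i _ => by omega)
    simp only [Nat.card_Ico, smul_eq_mul, mul_one] at hb
    omega
  set p := ((range (n + 1)).filter (fun i => v + 1 ≤ α i)).card with hp0
  set q := ((range (n + 1)).filter (fun i => v ≤ α i)).card with hq0
  have hp : ∀ i, v + 1 ≤ α i ↔ i < p := by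
    intro i
    have hmem := prefix_mem ((range (n + 1)).filter (fun i => v + 1 ≤ α i)) (filter_subset _ _)
      (fun a b hab hb => by
        simp only [mem_filter, mem_range] at hb ⊢
        exact ⟨by omega, le_trans hb.2 (hα hab)⟩) i
    rw [mem_filter, mem_range] at hmem
    rw [← hp0] at hmem
    constructor
    · intro h
      refine hmem.mp ⟨?_, h⟩
      by_contra hni
      have := h0 i (by omega)
      omega
    · exact fun h => (hmem.mpr h).2
  have hq : ∀ i, v ≤ α i ↔ i < q := by
    intro i
    have hmem := prefix_mem ((range (n + 1)).filter (fun i => v ≤ α i)) (filter_subset _ _)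
      (fun a b hab hb => by
        simp only [mem_filter, mem_range] at hb ⊢
        exact ⟨by omega, le_trans hb.2 (hα hab)⟩) i
    rw [mem_filter, mem_range] at hmem
    rw [← hq0] at hmem
    constructor
    · intro h
      refine hmem.mp ⟨?_, h⟩
      by_contra hni
      have := h0 i (by omega)
      omega
    · exact fun h => (hmem.mpr h).2
  clear hp0 hq0
  have hps : p ≤ s := by have h := hp s; rw [← hv0] at h; omega
  have hsq : s + 1 ≤ q := by have h := hq s; rw [← hv0] at h; omega
  have hqn : q ≤ n + 1 := by
    have h := hq (n + 1)
    have := h0 (n + 1) (le_refl _)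
    omega
  set c := p - 1 with hc0
  set d := s - c with hd0
  have hval_le : ∀ i, p ≤ i → α i ≤ v := fun i hi => by have := hp i; omega
  have hval_ge : ∀ i, i < q → v ≤ α i := fun i hi => by have := hq i; omega
  have hval_eq : ∀ i, p ≤ i → i < q → α i = v := fun i h1 h2 =>
    le_antisymm (hval_le i h1) (hval_ge i h2)
  have hval_lt : ∀ i, q ≤ i → α i < v := fun i hi => by have := hq i; omega
  set T := Ico 1 p ∪ Ico (q - d) q with hT0
  have hmemT : ∀ i, i ∈ T ↔ (1 ≤ i ∧ i < p) ∨ (q - d ≤ i ∧ i < q) := by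
    intro i; rw [hT0]; simp [mem_union, mem_Ico]
  have hTsub : T ⊆ Ico 1 (n + 1) := by
    intro i hi; rw [hmemT] at hi; rw [mem_Ico]; omega
  have hTcard : T.card = s := by
    rw [hT0, card_union_of_disjoint, Nat.card_Ico, Nat.card_Ico]
    · omega
    · rw [Finset.disjoint_left]
      intro a ha hb
      rw [mem_Ico] at ha hb
      omega
  have hTpos : ∀ i ∈ T, 1 ≤ α i := fun i hi => by
    rw [hmemT] at hi
    have := hval_ge i (by omega)
    omega
  set β := redSeq α T with hβ0
  have hβ : ∀ j, β j + (if j + 1 ∈ T then 1 else 0) = α (j + 1) := by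
    intro j
    have hrs : β j = if j + 1 ∈ T then α (j + 1) - 1 else α (j + 1) := rfl
    by_cases h : j + 1 ∈ T
    · rw [hrs, if_pos h, if_pos h]
      have := hTpos _ h
      omega
    · rw [hrs, if_neg h, if_neg h]
      omega
  have hβle : ∀ j, β j ≤ α (j + 1) := fun j => by
    have h2 := hβ j
    by_cases h : j + 1 ∈ T
    · rw [if_pos h] at h2; omega
    · rw [if_neg h] at h2; omega
  have hβanti : Antitone β := by
    apply antitone_nat_of_succ_le
    intro j
    have h1 := hβ j
    have h2 := hβ (j + 1)
    simp only [show j + 1 + 1 = j + 2 from rfl] at h2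
    have hmono : α (j + 2) ≤ α (j + 1) := hα (by omega)
    by_cases t1 : j + 1 ∈ T <;> by_cases t2 : j + 2 ∈ T <;>
      simp only [t1, t2, if_true, if_false] at h1 h2
    · omega
    · -- j+1 ∈ T, j+2 ∉ T : strict drop
      have hstrict : α (j + 2) < α (j + 1) := by
        rw [hmemT] at t1 t2
        rcases t1 with h | h
        · have hge : p ≤ j + 2 := by omega
          have := hval_le (j + 2) hge
          have := hp (j + 1)
          omega
        · have hge : q ≤ j + 2 := by omega
          have := hval_lt (j + 2) hge
          have := hval_ge (j + 1) (by omega)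
          omega
      omega
    · omega
    · omega
  have hβz : ∀ j, n ≤ j → β j = 0 := fun j hj => by
    have := hβle j
    have := h0 (j + 1) (by omega)
    omega
  have hshiftk : ∀ k, ∑ i ∈ Ico 1 (k + 1), α i = ∑ j ∈ range k, α (j + 1) :=
    fun k => shift_sum1 α k
  have hTcount : ∀ k, ∑ j ∈ range k, (if j + 1 ∈ T then (1 : ℕ) else 0)
      = (T ∩ Ico 1 (k + 1)).card := by
    intro k
    have h1 : ∑ i ∈ Ico 1 (k + 1), (if i ∈ T then (1 : ℕ) else 0)
        = ∑ j ∈ range k, (if j + 1 ∈ T then (1 : ℕ) else 0) :=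
      shift_sum1 (fun i => if i ∈ T then (1 : ℕ) else 0) k
    rw [← h1, Finset.sum_ite_mem, Finset.sum_const, smul_eq_mul, mul_one, Finset.inter_comm]
  have hAm : ∀ m, ∑ i ∈ range (m + 1), α i = s + ∑ i ∈ Ico 1 (m + 1), α i := by
    intro m
    rw [Finset.range_eq_Ico, Finset.sum_eq_sum_Ico_succ_bot (by omega)]
  have hLt : ∀ k, egL β k + (T ∩ Ico 1 (k + 1)).card = ∑ i ∈ Ico 1 (k + 1), α i := by
    intro k
    have h1 : ∑ j ∈ range k, (β j + if j + 1 ∈ T then 1 else 0) = ∑ j ∈ range k, α (j + 1) :=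
      Finset.sum_congr rfl fun j _ => hβ j
    rw [Finset.sum_add_distrib, hTcount k] at h1
    rw [egL, h1, hshiftk]
  have hsumβ : ∑ j ∈ range n, β j + 2 * s = ∑ i ∈ range (n + 1), α i := by
    have h1 := hLt n
    have h2 : T ∩ Ico 1 (n + 1) = T := inter_eq_left.mpr hTsub
    rw [h2, hTcard] at h1
    have h3 := hAm n
    rw [egL] at h1
    omega
  have hevenβ : Even (∑ j ∈ range n, β j) := by
    rcases heven with ⟨w, hw⟩
    exact ⟨w - s, by omega⟩
  refine ⟨T, hTsub, hTcard, hβ, hβanti, hβz, hevenβ, ?_⟩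
  apply durfee hβanti
  intro k0 hk1 hkn hD
  obtain ⟨m, rfl⟩ : ∃ m, k0 = m + 1 := ⟨k0 - 1, by omega⟩
  set k := m + 1 with hk0
  rw [show k - 1 = m from by omega] at hD
  have hβk : β m + (if k ∈ T then 1 else 0) = α k := hβ m
  have hβmle : β m ≤ α k := hβle m
  have hαks : α k ≤ s := by rw [hs0]; exact hα (Nat.zero_le k)
  have hks : k ≤ s := by omega
  have hup : ∑ i ∈ Ico 1 (k + 1), α i ≤ k * s := by
    have h := Finset.sum_le_card_nsmul (Ico 1 (k + 1)) α s
      (fun i _ => by rw [hs0]; exact hα (Nat.zero_le i))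
    simpa [Nat.card_Ico, smul_eq_mul] using h
  have hLtk := hLt k
  rw [egF]
  rw [show k - 1 = m from by omega]
  by_cases hI : k < p
  · -- CASE I
    have ht : (T ∩ Ico 1 (k + 1)).card = k := by
      have h1 : T ∩ Ico 1 (k + 1) = Ico 1 (k + 1) := by
        apply inter_eq_right.mpr
        intro i hi
        rw [mem_Ico] at hi
        rw [hmemT]
        left; omega
      rw [h1, Nat.card_Ico]
      omega
    by_cases hIv : v ≤ k
    · -- I.a
      have hEG := heg (k + 1) (by omega) (by omega)
      rw [egL, egF, show k + 1 - 1 = k from by omega] at hEG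
      have hterm : ∀ i ∈ Ico (k + 1) (n + 1),
          min (k + 1) (α i) ≤ min k (β (i - 1)) + (if i ∈ T then 1 else 0) := by
        intro i hi
        rw [mem_Ico] at hi
        have hb := hβ (i - 1)
        rw [show i - 1 + 1 = i from by omega] at hb
        by_cases h : i ∈ T
        · rw [if_pos h] at hb ⊢
          omega
        · rw [if_neg h] at hb ⊢
          have hip : p ≤ i := by
            by_contra hip
            exact h (by rw [hmemT]; left; omega)
          have := hval_le i hip
          omega
      have hsum2 : ∑ i ∈ Ico (k + 1) (n + 1), min (k + 1) (α i) ≤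
          ∑ i ∈ Ico (k + 1) (n + 1), min k (β (i - 1))
            + ∑ i ∈ Ico (k + 1) (n + 1), (if i ∈ T then (1 : ℕ) else 0) := by
        rw [← Finset.sum_add_distrib]
        exact Finset.sum_le_sum hterm
      have hshift2 : ∑ i ∈ Ico (k + 1) (n + 1), min k (β (i - 1))
          = ∑ j ∈ Ico k n, min k (β j) := by
        rw [shift_sum (fun i => min k (β (i - 1))) k n]
        exact Finset.sum_congr rfl fun j _ => by
          rw [show j + 1 - 1 = j from by omega]
      have hTtail : ∑ i ∈ Ico (k + 1) (n + 1), (if i ∈ T then (1 : ℕ) else 0)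
          + (T ∩ Ico 1 (k + 1)).card = s := by
        rw [Finset.sum_ite_mem, Finset.sum_const, smul_eq_mul, mul_one]
        have hdisj : Disjoint (T ∩ Ico 1 (k + 1)) (Ico (k + 1) (n + 1) ∩ T) := by
          rw [Finset.disjoint_left]
          intro a ha hb
          rw [mem_inter, mem_Ico] at ha hb
          omega
        have hunion : (T ∩ Ico 1 (k + 1)) ∪ (Ico (k + 1) (n + 1) ∩ T) = T := by
          ext i
          simp only [mem_union, mem_inter, mem_Ico]
          constructor
          · rintro (h | h) <;> tauto
          · intro hi
            have := hTsub hi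
            rw [mem_Ico] at this
            by_cases hik : i < k + 1
            · left; exact ⟨hi, by omega⟩
            · right; exact ⟨by omega, hi⟩
        have := card_union_of_disjoint hdisj
        rw [hunion, hTcard] at this
        omega
      have hAk := hAm k
      have he1 : (k + 1) * k = k * m + 2 * k := by rw [hk0]; ring
      have he2 : k * m = k * (k - 1) := by rw [show k - 1 = m from rfl]
      omega
    · -- I.b : v ≥ k + 1
      push_neg at hIv
      have hlow : (q - 1 - k) * k ≤ ∑ j ∈ Ico k n, min k (β j) := by
        have hsub : Ico k (q - 1) ⊆ Ico k n := Finset.Ico_subset_Ico_right (by omega)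
        have hterm : ∀ j ∈ Ico k (q - 1), k ≤ min k (β j) := by
          intro j hj
          rw [mem_Ico] at hj
          have hb := hβ j
          have hge : v ≤ α (j + 1) := hval_ge (j + 1) (by omega)
          by_cases h : j + 1 ∈ T
          · rw [if_pos h] at hb; omega
          · rw [if_neg h] at hb; omega
        calc (q - 1 - k) * k = ∑ _j ∈ Ico k (q - 1), k := by
              rw [Finset.sum_const, Nat.card_Ico, smul_eq_mul]
          _ ≤ ∑ j ∈ Ico k (q - 1), min k (β j) := Finset.sum_le_sum hterm
          _ ≤ ∑ j ∈ Ico k n, min k (β j) :=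
              Finset.sum_le_sum_of_subset hsub
      have hmul : k * s ≤ k * (m + (q - 1 - k) + 1) :=
        Nat.mul_le_mul_left k (by omega)
      have hexp : k * (m + (q - 1 - k) + 1) = k * m + (q - 1 - k) * k + k := by ring
      omega
  · -- CASE II : p ≤ k
    push_neg at hI
    have hkq : k < q := by omega
    have hαk : α k = v := hval_eq k hI hkq
    have hkT : k ∈ T ↔ q - d ≤ k := by
      rw [hmemT]; omega
    by_cases hIIb : q - d ≤ k
    · -- II.b
      have hkinT : k ∈ T := hkT.mpr hIIb
      rw [if_pos hkinT] at hβk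
      have hv2 : k + 1 ≤ v := by omega
      have ht : (T ∩ Ico 1 (k + 1)).card + q = s + k + 1 := by
        have h1 : T ∩ Ico 1 (k + 1) = Ico 1 p ∪ Ico (q - d) (k + 1) := by
          ext i
          rw [mem_inter, hmemT, mem_union, mem_Ico, mem_Ico, mem_Ico]
          omega
        rw [h1, card_union_of_disjoint, Nat.card_Ico, Nat.card_Ico]
        · omega
        · rw [Finset.disjoint_left]
          intro a ha hb
          rw [mem_Ico] at ha hb
          omega
      have hlow : (q - 1 - k) * k ≤ ∑ j ∈ Ico k n, min k (β j) := by
        have hsub : Ico k (q - 1) ⊆ Ico k n := Finset.Ico_subset_Ico_right (by omega)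
        have hterm : ∀ j ∈ Ico k (q - 1), k ≤ min k (β j) := by
          intro j hj
          rw [mem_Ico] at hj
          have hb := hβ j
          have hge : v ≤ α (j + 1) := hval_ge (j + 1) (by omega)
          by_cases h : j + 1 ∈ T
          · rw [if_pos h] at hb; omega
          · rw [if_neg h] at hb; omega
        calc (q - 1 - k) * k = ∑ _j ∈ Ico k (q - 1), k := by
              rw [Finset.sum_const, Nat.card_Ico, smul_eq_mul]
          _ ≤ ∑ j ∈ Ico k (q - 1), min k (β j) := Finset.sum_le_sum hterm
          _ ≤ ∑ j ∈ Ico k n, min k (β j) :=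
              Finset.sum_le_sum_of_subset hsub
      obtain ⟨Q, hQ⟩ : ∃ Q, q = m + 2 + Q := ⟨q - (m + 2), by omega⟩
      have hq1k : q - 1 - k = Q := by omega
      rw [hq1k] at hlow
      have hm1 : m * s ≤ m * (m + 1 + Q) := Nat.mul_le_mul_left m (by omega)
      have hexp1 : m * (m + 1 + Q) = (m + 1) * m + Q * m := by ring
      have hexp2 : k * s = m * s + s := by rw [hk0]; ring
      have hexp3 : Q * k = Q * m + Q := by rw [hk0]; ring
      have hek : k * m = (m + 1) * m := by rw [hk0]
      omega
    · -- II.a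
      push_neg at hIIb
      have hknT : k ∉ T := fun h => by rw [hkT] at h; omega
      rw [if_neg hknT] at hβk
      have hvk : k ≤ v := by omega
      have ht : (T ∩ Ico 1 (k + 1)).card = c := by
        have h1 : T ∩ Ico 1 (k + 1) = Ico 1 p := by
          ext i
          rw [mem_inter, hmemT, mem_Ico, mem_Ico]
          omega
        rw [h1, Nat.card_Ico]
      have hQbig : k + 1 + d ≤ q := by omega
      have hck : c ≤ m := by omega
      by_cases hv3 : k + 1 ≤ v
      · -- II.a.1
        have hlow : (q - 1 - k) * k ≤ ∑ j ∈ Ico k n, min k (β j) := by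
          have hsub : Ico k (q - 1) ⊆ Ico k n := Finset.Ico_subset_Ico_right (by omega)
          have hterm : ∀ j ∈ Ico k (q - 1), k ≤ min k (β j) := by
            intro j hj
            rw [mem_Ico] at hj
            have hb := hβ j
            have hge : v ≤ α (j + 1) := hval_ge (j + 1) (by omega)
            by_cases h : j + 1 ∈ T
            · rw [if_pos h] at hb; omega
            · rw [if_neg h] at hb; omega
          calc (q - 1 - k) * k = ∑ _j ∈ Ico k (q - 1), k := by
                rw [Finset.sum_const, Nat.card_Ico, smul_eq_mul]
            _ ≤ ∑ j ∈ Ico k (q - 1), min k (β j) := Finset.sum_le_sum hterm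
            _ ≤ ∑ j ∈ Ico k n, min k (β j) :=
                Finset.sum_le_sum_of_subset hsub
        obtain ⟨Q, hQ⟩ : ∃ Q, q = m + 2 + Q := ⟨q - (m + 2), by omega⟩
        have hq1k : q - 1 - k = Q := by omega
        rw [hq1k] at hlow
        have hm1 : k * s ≤ k * (c + Q) := Nat.mul_le_mul_left k (by omega)
        have hexp1 : k * (c + Q) = k * c + Q * k := by ring
        have hm2 : m * c ≤ m * m := Nat.mul_le_mul_left m hck
        have hexp2 : k * c = m * c + c := by rw [hk0]; ring
        have hexp3 : k * m = m * m + m := by rw [hk0]; ring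
        omega
      · -- II.a.2 : v = k
        push_neg at hv3
        have hveq : v = k := by omega
        have hmins : ∀ j ∈ Ico k n, min k (β j) = β j := by
          intro j hj
          rw [mem_Ico] at hj
          have h1 := hβle j
          have h2 : α (j + 1) ≤ v := hval_le (j + 1) (by omega)
          omega
        rw [Finset.sum_congr rfl hmins]
        have hsplitβ : egL β k + ∑ j ∈ Ico k n, β j = ∑ j ∈ range n, β j := by
          rw [egL]; exact Finset.sum_range_add_sum_Ico β hkn
        by_cases hpar : m = 0 ∧ c = 0
        · -- parity case
          obtain ⟨hm0, hc0'⟩ := hpar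
          subst hm0
          have hAval : ∑ i ∈ range (n + 1), α i = s + (q - 1) := by
            rw [hAm n]
            have hsplit2 : ∑ i ∈ Ico 1 (n + 1), α i
                = ∑ i ∈ Ico 1 q, α i + ∑ i ∈ Ico q (n + 1), α i :=
              (Finset.sum_Ico_consecutive _ (by omega) hqn).symm
            have hone : ∑ i ∈ Ico 1 q, α i = q - 1 := by
              have : ∀ i ∈ Ico 1 q, α i = 1 := by
                intro i hi
                rw [mem_Ico] at hi
                have := hval_eq i (by omega) hi.2
                omega
              rw [Finset.sum_congr rfl this, Finset.sum_const, Nat.card_Ico, smul_eq_mul,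
                mul_one]
            have hzero : ∑ i ∈ Ico q (n + 1), α i = 0 :=
              Finset.sum_eq_zero fun i hi => by
                have := hval_lt i (mem_Ico.mp hi).1
                omega
            omega
          have hq3 : s + 3 ≤ q := by
            rcases heven with ⟨w, hw⟩
            rw [hAval] at hw
            omega
          have hn2 : 2 ≤ n := by omega
          have hegL1 : egL β 1 = β 0 := by simp [egL]
          have hβ1 : β 1 = 1 := by
            have hb := hβ 1
            have h2T : (2 : ℕ) ∉ T := by
              rw [hmemT]
              omega
            simp only [show (1 : ℕ) + 1 = 2 from rfl] at hb
            rw [if_neg h2T] at hb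
            have := hval_eq 2 (by omega) (by omega)
            omega
          have hβ0le : β 0 ≤ 1 := by
            have h1 := hβle 0
            simp only [show (0 : ℕ) + 1 = 1 from rfl] at h1
            have := hval_le 1 (by omega)
            omega
          have hlow1 : 1 ≤ ∑ j ∈ Ico 1 n, β j := by
            calc 1 = β 1 := hβ1.symm
              _ ≤ ∑ j ∈ Ico 1 n, β j :=
                Finset.single_le_sum (fun i _ => Nat.zero_le _) (by rw [mem_Ico]; omega)
          have hmin1 : ∑ j ∈ Ico 1 n, β j = ∑ j ∈ Ico 1 n, min 1 (β j) := by
            refine Finset.sum_congr rfl fun j hj => ?_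
            rw [mem_Ico] at hj
            have h1 := hβle j
            have h2 : α (j + 1) ≤ v := hval_le (j + 1) (by omega)
            omega
          rw [show k = 1 from by omega]
          have heta : (Ico 1 n).sum β = ∑ j ∈ Ico 1 n, β j := rfl
          omega
        · -- main subcase
          have heta : (Ico k n).sum β = ∑ j ∈ Ico k n, β j := rfl
          have hcase : 1 ≤ m ∨ 1 ≤ c := by omega
          have hXegL : ∑ i ∈ range (k + 1), α i = s + egL β k + c := by
            rw [hAm k]
            omega
          set P := max p 1 with hP0
          have hX : ∑ i ∈ range (k + 1), α i ≤ s + c * s + (m + 1 - c) * k := by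
            rw [hAm k]
            have hsplit2 : ∑ i ∈ Ico 1 (k + 1), α i
                = ∑ i ∈ Ico 1 P, α i + ∑ i ∈ Ico P (k + 1), α i :=
              (Finset.sum_Ico_consecutive _ (by omega) (by omega)).symm
            have hb1 : ∑ i ∈ Ico 1 P, α i ≤ c * s := by
              have h := Finset.sum_le_card_nsmul (Ico 1 P) α s
                (fun i _ => by rw [hs0]; exact hα (Nat.zero_le i))
              rw [Nat.card_Ico, smul_eq_mul] at h
              have : P - 1 = c := by omega
              rw [this] at h
              exact h
            have hb2 : ∑ i ∈ Ico P (k + 1), α i = (m + 1 - c) * k := by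
              have hval : ∀ i ∈ Ico P (k + 1), α i = k := by
                intro i hi
                rw [mem_Ico] at hi
                have := hval_eq i (by omega) (by omega)
                omega
              rw [Finset.sum_congr rfl hval, Finset.sum_const, Nat.card_Ico, smul_eq_mul]
              congr 1
              omega
            omega
          have hA2 : ∑ i ∈ range (k + 1), α i + (q - (k + 1)) * k
              ≤ ∑ i ∈ range (n + 1), α i := by
            have hsplit3 : ∑ i ∈ range (k + 1), α i + ∑ i ∈ Ico (k + 1) (n + 1), α i
                = ∑ i ∈ range (n + 1), α i :=
              Finset.sum_range_add_sum_Ico α (by omega)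
            have hb3 : (q - (k + 1)) * k ≤ ∑ i ∈ Ico (k + 1) (n + 1), α i := by
              have hsub : Ico (k + 1) q ⊆ Ico (k + 1) (n + 1) :=
                Finset.Ico_subset_Ico_right hqn
              have hval : ∀ i ∈ Ico (k + 1) q, k ≤ α i := by
                intro i hi
                rw [mem_Ico] at hi
                have := hval_ge i hi.2
                omega
              calc (q - (k + 1)) * k = ∑ _i ∈ Ico (k + 1) q, k := by
                    rw [Finset.sum_const, Nat.card_Ico, smul_eq_mul]
                _ ≤ ∑ i ∈ Ico (k + 1) q, α i := Finset.sum_le_sum hval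
                _ ≤ ∑ i ∈ Ico (k + 1) (n + 1), α i := Finset.sum_le_sum_of_subset hsub
            omega
          have hcs : c + 1 ≤ s := by omega
          obtain ⟨f, hf⟩ : ∃ f, m = c + f := ⟨m - c, by omega⟩
          obtain ⟨e, he⟩ : ∃ e, s = c + 1 + e := ⟨s - (c + 1), by omega⟩
          have hfe : f ≤ e := by omega
          have hkey : 1 ≤ c * f + e * f + c := by
            rcases hcase with h | h
            · rcases Nat.eq_zero_or_pos c with hc | hc
              · have hf1 : 0 < f := by omega
                have := Nat.mul_pos (show 0 < e by omega) hf1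
                omega
              · omega
            · omega
          have hfinal : s + c * s + (m + 1 - c) * k ≤ k * m + d * k + 2 * c := by
            have hm1c : m + 1 - c = 1 + f := by omega
            have hd' : d = 1 + e := by omega
            rw [hm1c, hd', hk0, hf, he]
            exact keyineq c e f hkey
          have hdlow : d * k ≤ (q - (k + 1)) * k := Nat.mul_le_mul_right k (by omega)
          omega


def IsGraphic {n : ℕ} (d : Fin n → ℕ) : Prop :=
  ∃ (G : SimpleGraph (Fin n)) (_ : DecidableRel G.Adj), ∀ i, G.degree i = d i


theorem eg_main : ∀ (n : ℕ) (α : ℕ → ℕ), Antitone α → (∀ i, n ≤ i → α i = 0) →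
    Even (∑ i ∈ range n, α i) → egOK n α →
    ∃ (G : SimpleGraph (Fin n)) (_ : DecidableRel G.Adj), ∀ i : Fin n, G.degree i = α i := by
  intro n
  induction n with
  | zero =>
    intro α _ _ _ _
    exact ⟨⊥, by infer_instance, fun i => i.elim0⟩
  | succ n ih =>
    intro α hα h0 heven heg
    by_cases hs : 1 ≤ α 0
    · obtain ⟨T, hTsub, hTcard, hβprop, hβanti, hβz, hβeven, hβeg⟩ :=
        reduction hα h0 heg heven hs
      obtain ⟨G, hG, hdeg⟩ := ih (redSeq α T) hβanti hβz hβeven hβeg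
      set S : Finset (Fin n) := univ.filter (fun j : Fin n => (j : ℕ) + 1 ∈ T) with hS
      refine ⟨extGraph G S, extGraph.adjDecidable G S, ?_⟩
      have hcard : S.card = T.card := by
        apply Finset.card_bij (fun (j : Fin n) _ => (j : ℕ) + 1)
        · intro j hj
          rw [hS, mem_filter] at hj
          exact hj.2
        · intro j1 h1 j2 h2 heq
          exact Fin.val_injective (by omega)
        · intro t ht
          have htI := hTsub ht
          rw [mem_Ico] at htI
          refine ⟨⟨t - 1, by omega⟩, ?_, by simp; omega⟩
          rw [hS, mem_filter]
          refine ⟨mem_univ _, ?_⟩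
          simpa [show t - 1 + 1 = t from by omega] using ht
      intro i
      induction i using Fin.cases with
      | zero =>
        rw [extGraph_degree_zero, hcard, hTcard]
        simp
      | succ j =>
        rw [extGraph_degree_succ, hdeg j]
        have hmem : j ∈ S ↔ (j : ℕ) + 1 ∈ T := by
          rw [hS, mem_filter]
          simp
        have hb := hβprop (j : ℕ)
        rw [Fin.val_succ]
        by_cases h : (j : ℕ) + 1 ∈ T
        · rw [if_pos (hmem.mpr h), if_pos h] at *
          omega
        · rw [if_neg (fun hh => h (hmem.mp hh)), if_neg h] at *
          omega
    · have hz : ∀ i : ℕ, α i = 0 := fun i => by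
        have h1 : α i ≤ α 0 := hα (Nat.zero_le i)
        omega
      refine ⟨⊥, by infer_instance, fun i => ?_⟩
      simp [hz, SimpleGraph.bot_degree]

theorem eg_sufficient {n : ℕ} (α : Fin n → ℕ) (hα : Antitone α)
    (heven : Even (∑ i, α i))
    (heg : egOK n (fun i => if h : i < n then α ⟨i, h⟩ else 0)) : IsGraphic α := by
  set α' : ℕ → ℕ := fun i => if h : i < n then α ⟨i, h⟩ else 0 with hα'
  have hα'anti : Antitone α' := by
    intro i j hij
    simp only [hα']
    by_cases hj : j < n
    · rw [dif_pos hj, dif_pos (show i < n by omega)]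
      exact hα (by simpa [Fin.mk_le_mk] using hij)
    · rw [dif_neg hj]
      exact Nat.zero_le _
  have h0 : ∀ i, n ≤ i → α' i = 0 := fun i hi => by
    simp only [hα']
    rw [dif_neg (by omega)]
  have hsum : ∑ i, α i = ∑ i ∈ range n, α' i := by
    rw [← Fin.sum_univ_eq_sum_range]
    exact Finset.sum_congr rfl fun i _ => by
      simp only [hα']
      rw [dif_pos i.isLt]
  obtain ⟨G, hG, hdeg⟩ := eg_main n α' hα'anti h0 (hsum ▸ heven) heg
  exact ⟨G, hG, fun i => by
    rw [hdeg i]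
    simp only [hα']
    rw [dif_pos i.isLt]⟩


/-- Zverovich–Zverovich: a nonincreasing sequence of positive integers with even
sum and `n ≥ (α₁+αₙ+1)²/(4αₙ)` is graphic. -/
theorem stmt_1 {n : ℕ} (hn : 0 < n) (α : Fin n → ℕ) (hα : Antitone α)
    (hpos : ∀ i, 0 < α i) (heven : Even (∑ i, α i))
    (hineq : (n : ℚ) ≥
      ((α ⟨0, hn⟩ : ℚ) + (α ⟨n - 1, by omega⟩ : ℚ) + 1) ^ 2 /
        (4 * (α ⟨n - 1, by omega⟩ : ℚ))) :
    IsGraphic α := by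
  set a := α ⟨0, hn⟩ with ha0
  set b := α ⟨n - 1, by omega⟩ with hb0
  have hb : 1 ≤ b := hpos _
  have hb' : (0 : ℚ) < 4 * (b : ℚ) := by positivity
  rw [ge_iff_le, div_le_iff₀ hb'] at hineq
  have hQ : ((a : ℚ) + b + 1) ^ 2 ≤ 4 * b * n := by
    calc ((a : ℚ) + b + 1) ^ 2 ≤ (n : ℚ) * (4 * b) := hineq
      _ = 4 * b * n := by ring
  have hZ : ((a : ℤ) + b + 1) ^ 2 ≤ 4 * b * n := by
    have := hQ
    rw [show ((a : ℚ) + b + 1) = (((a + b + 1 : ℕ) : ℚ)) by push_cast; ring] at this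
    rw [show (4 : ℚ) * b * n = (((4 * b * n : ℕ) : ℚ)) by push_cast; ring] at this
    have hN : (a + b + 1) ^ 2 ≤ 4 * b * n := by exact_mod_cast this
    exact_mod_cast hN
  have han : a + 1 ≤ n := by
    have h1 : (4 : ℤ) * b * (a + 1) ≤ ((a : ℤ) + b + 1) ^ 2 := by
      nlinarith [sq_nonneg ((a : ℤ) + 1 - b)]
    have h2 : (4 : ℤ) * b * (a + 1) ≤ 4 * b * n := le_trans h1 hZ
    have hbZ : (0 : ℤ) < 4 * b := by positivity
    have := le_of_mul_le_mul_left (by linarith [h2] : (4 * (b:ℤ)) * (a + 1) ≤ (4 * b) * n) hbZ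
    exact_mod_cast this
  apply eg_sufficient α hα heven
  intro k hk1 hkn
  set α' : ℕ → ℕ := fun i => if h : i < n then α ⟨i, h⟩ else 0 with hα'
  have hva : ∀ i, i < n → α' i ≤ a := fun i hi => by
    simp only [hα']
    rw [dif_pos hi, ha0]
    exact hα (by simp [Fin.mk_le_mk])
  have hvb : ∀ i, i < n → b ≤ α' i := fun i hi => by
    simp only [hα']
    rw [dif_pos hi, hb0]
    exact hα (by simp [Fin.mk_le_mk]; omega)
  have hL : egL α' k ≤ k * a := by
    have h := Finset.sum_le_card_nsmul (range k) α' a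
      (fun i hi => hva i (by rw [mem_range] at hi; omega))
    simpa [egL, card_range, smul_eq_mul] using h
  rw [egF]
  by_cases hcase : k ≤ b
  · -- all mins are k
    have hmins : ∀ i ∈ Ico k n, min k (α' i) = k := by
      intro i hi
      rw [mem_Ico] at hi
      have := hvb i hi.2
      omega
    rw [Finset.sum_congr rfl hmins, Finset.sum_const, Nat.card_Ico, smul_eq_mul]
    obtain ⟨x, rfl⟩ : ∃ x, k = x + 1 := ⟨k - 1, by omega⟩
    obtain ⟨y, hy⟩ : ∃ y, n = x + 1 + y := ⟨n - (x + 1), by omega⟩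
    have hae : a ≤ x + y := by omega
    have hmul : (x + 1) * a ≤ (x + 1) * (x + y) := Nat.mul_le_mul_left _ hae
    have h1 : x + 1 - 1 = x := by omega
    have h2 : n - (x + 1) = y := by omega
    rw [h1, h2]
    have hexp : (x + 1) * (x + y) = (x + 1) * x + y * (x + 1) := by ring
    omega
  · -- k > b
    push_neg at hcase
    have hmins : ∀ i ∈ Ico k n, b ≤ min k (α' i) := by
      intro i hi
      rw [mem_Ico] at hi
      have := hvb i hi.2
      omega
    have hlow : (n - k) * b ≤ ∑ i ∈ Ico k n, min k (α' i) := by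
      calc (n - k) * b = ∑ _i ∈ Ico k n, b := by
            rw [Finset.sum_const, Nat.card_Ico, smul_eq_mul]
        _ ≤ ∑ i ∈ Ico k n, min k (α' i) := Finset.sum_le_sum hmins
    have hkey : k * a ≤ k * (k - 1) + (n - k) * b := by
      zify [hk1, hkn]
      nlinarith [hZ, sq_nonneg ((a : ℤ) + b + 1 - 2 * k), hb]
    omega
end

section
/- If a degree sequence α is graphic and α majorizes a sequence β (of the same length and sum), then β is graphic. -/
lemma exists_k {n : ℕ} (G : SimpleGraph (Fin n)) [DecidableRel G.Adj] (i j : Fin n)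
    (h : G.degree j < G.degree i) : ∃ k, G.Adj i k ∧ ¬ G.Adj j k ∧ k ≠ j := by
  by_contra hc
  push_neg at hc
  have hdi : G.degree i = (G.neighborFinset i).card := rfl
  have hdj : G.degree j = (G.neighborFinset j).card := rfl
  have hsub : G.neighborFinset i \ {j} ⊆ G.neighborFinset j := by
    intro k hk
    simp only [Finset.mem_sdiff, SimpleGraph.mem_neighborFinset, Finset.mem_singleton] at hk
    rw [SimpleGraph.mem_neighborFinset]
    by_contra hA
    exact hk.2 (hc k hk.1 hA)
  have hcard : (G.neighborFinset i).card ≤ (G.neighborFinset i \ {j}).card + 1 := by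
    have := Finset.card_le_card_sdiff_add_card (s := G.neighborFinset i) (t := {j})
    simpa using this
  have hle : (G.neighborFinset i \ {j}).card ≤ (G.neighborFinset j).card :=
    Finset.card_le_card hsub
  rw [hdi, hdj] at h
  have heq : (G.neighborFinset i \ {j}).card = (G.neighborFinset j).card := by omega
  have hset : G.neighborFinset i \ {j} = G.neighborFinset j :=
    Finset.eq_of_subset_of_card_le hsub (by omega)
  have hjmem : j ∈ G.neighborFinset i := by
    by_contra hj
    have hd : G.neighborFinset i \ {j} = G.neighborFinset i := by
      apply Finset.sdiff_eq_self_of_disjoint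
      simp [Finset.disjoint_singleton_right, hj]
    rw [hd] at heq
    omega
  have hij : G.Adj i j := by simpa [SimpleGraph.mem_neighborFinset] using hjmem
  have hii : i ∈ G.neighborFinset i \ {j} := by
    rw [hset]; simpa [SimpleGraph.mem_neighborFinset] using hij.symm
  simp [SimpleGraph.mem_neighborFinset] at hii


def swapG {V : Type*} (G : SimpleGraph V) (i j k : V) (hjk : j ≠ k) : SimpleGraph V where
  Adj a b := (G.Adj a b ∧ s(a,b) ≠ s(i,k)) ∨ s(a,b) = s(j,k)
  symm := by
    constructor
    intro a b hab
    rcases hab with ⟨h1, h2⟩ | h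
    · exact Or.inl ⟨h1.symm, by rwa [Sym2.eq_swap]⟩
    · exact Or.inr (by rwa [Sym2.eq_swap])
  loopless := by
    constructor
    intro a ha
    rcases ha with ⟨h1, _⟩ | h
    · exact G.loopless.irrefl a h1
    · rw [Sym2.eq_iff] at h
      rcases h with ⟨rfl, rfl⟩ | ⟨rfl, rfl⟩ <;> exact hjk rfl

lemma swapG_adj {V : Type*} (G : SimpleGraph V) (i j k : V) (hjk : j ≠ k) (a b : V) :
    (swapG G i j k hjk).Adj a b ↔ ((G.Adj a b ∧ s(a,b) ≠ s(i,k)) ∨ s(a,b) = s(j,k)) :=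
  Iff.rfl

lemma graphic_transfer {n : ℕ} {d : Fin n → ℕ} {i j : Fin n} (hij : d j < d i)
    (hg : IsGraphic d) :
    IsGraphic (Function.update (Function.update d i (d i - 1)) j (d j + 1)) := by
  obtain ⟨G, inst, hdeg⟩ := hg
  have hdij : G.degree j < G.degree i := by rw [hdeg i, hdeg j]; exact hij
  obtain ⟨k, hik, hjk, hkj⟩ := exists_k G i j hdij
  have hinej : i ≠ j := by rintro rfl; omega
  have hinek : i ≠ k := fun h => G.loopless.irrefl i (h ▸ hik)
  have hkj' : ¬ G.Adj k j := fun h => hjk h.symm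
  set G' : SimpleGraph (Fin n) := swapG G i j k (Ne.symm hkj) with hG'
  have hadj : ∀ a b, G'.Adj a b ↔
      ((G.Adj a b ∧ ¬((a = i ∧ b = k) ∨ (a = k ∧ b = i))) ∨ ((a = j ∧ b = k) ∨ (a = k ∧ b = j))) := by
    intro a b
    rw [hG', swapG_adj]
    constructor
    · rintro (⟨h1, h2⟩ | h3)
      · exact Or.inl ⟨h1, fun hc => h2 (Sym2.eq_iff.2 hc)⟩
      · exact Or.inr (Sym2.eq_iff.1 h3)
    · rintro (⟨h1, h2⟩ | h3)
      · exact Or.inl ⟨h1, fun hc => h2 (Sym2.eq_iff.1 hc)⟩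
      · exact Or.inr (Sym2.eq_iff.2 h3)
  have hAi : ∀ b, G'.Adj i b ↔ (G.Adj i b ∧ b ≠ k) := by
    intro b
    rw [hadj]
    constructor
    · rintro (⟨h1, h2⟩ | (⟨h3, -⟩ | ⟨h3, -⟩))
      · exact ⟨h1, fun hb => h2 (Or.inl ⟨rfl, hb⟩)⟩
      · exact absurd h3 hinej
      · exact absurd h3 hinek
    · rintro ⟨h1, h2⟩
      refine Or.inl ⟨h1, ?_⟩
      rintro (⟨-, h3⟩ | ⟨h3, -⟩); exact h2 h3; exact hinek h3
  have hAj : ∀ b, G'.Adj j b ↔ (G.Adj j b ∨ b = k) := by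
    intro b
    rw [hadj]
    constructor
    · rintro (⟨h1, -⟩ | (⟨-, h3⟩ | ⟨h3, -⟩))
      · exact Or.inl h1
      · exact Or.inr h3
      · exact absurd h3.symm hkj
    · rintro (h1 | h3)
      · refine Or.inl ⟨h1, ?_⟩
        rintro (⟨h3, -⟩ | ⟨h3, -⟩); exact hinej h3.symm; exact hkj h3.symm
      · exact Or.inr (Or.inl ⟨rfl, h3⟩)
  have hAk : ∀ b, G'.Adj k b ↔ ((G.Adj k b ∧ b ≠ i) ∨ b = j) := by
    intro b
    rw [hadj]
    constructor
    · rintro (⟨h1, h2⟩ | (⟨h3, -⟩ | ⟨-, h3⟩))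
      · exact Or.inl ⟨h1, fun hb => h2 (Or.inr ⟨rfl, hb⟩)⟩
      · exact absurd h3 hkj
      · exact Or.inr h3
    · rintro (⟨h1, h2⟩ | h3)
      · refine Or.inl ⟨h1, ?_⟩
        rintro (⟨h3, -⟩ | ⟨-, h3⟩); exact hinek h3.symm; exact h2 h3
      · exact Or.inr (Or.inr ⟨rfl, h3⟩)
  have hAo : ∀ a, a ≠ i → a ≠ j → a ≠ k → ∀ b, (G'.Adj a b ↔ G.Adj a b) := by
    intro a hai haj hak b
    rw [hadj]
    constructor
    · rintro (⟨h1, -⟩ | (⟨h3, -⟩ | ⟨h3, -⟩))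
      · exact h1
      · exact absurd h3 haj
      · exact absurd h3 hak
    · intro h1
      refine Or.inl ⟨h1, ?_⟩
      rintro (⟨h3, -⟩ | ⟨h3, -⟩); exact hai h3; exact hak h3
  haveI instG' : DecidableRel G'.Adj := fun a b =>
    Classical.dec _
  have hNi : G'.neighborFinset i = (G.neighborFinset i).erase k := by
    ext b
    rw [SimpleGraph.mem_neighborFinset, hAi b, Finset.mem_erase,
      SimpleGraph.mem_neighborFinset, and_comm]
  have hNj : G'.neighborFinset j = insert k (G.neighborFinset j) := by
    ext b
    rw [SimpleGraph.mem_neighborFinset, hAj b, Finset.mem_insert,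
      SimpleGraph.mem_neighborFinset, or_comm]
  have hNk : G'.neighborFinset k = insert j ((G.neighborFinset k).erase i) := by
    ext b
    rw [SimpleGraph.mem_neighborFinset, hAk b, Finset.mem_insert, Finset.mem_erase,
      SimpleGraph.mem_neighborFinset, or_comm, and_comm]
  have hNo : ∀ a, a ≠ i → a ≠ j → a ≠ k → G'.neighborFinset a = G.neighborFinset a := by
    intro a hai haj hak
    ext b
    rw [SimpleGraph.mem_neighborFinset, hAo a hai haj hak b, SimpleGraph.mem_neighborFinset]
  refine ⟨G', instG', ?_⟩
  intro a
  have hda : ∀ x, G'.degree x = (G'.neighborFinset x).card := fun _ => rfl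
  by_cases haj : a = j
  · rw [haj, Function.update_self, hda j, hNj, Finset.card_insert_of_notMem (by
      simpa [SimpleGraph.mem_neighborFinset] using hjk)]
    have : (G.neighborFinset j).card = d j := hdeg j
    omega
  by_cases hai : a = i
  · rw [hai, Function.update_of_ne (hai ▸ haj), Function.update_self, hda i, hNi,
      Finset.card_erase_of_mem (by simpa [SimpleGraph.mem_neighborFinset] using hik)]
    have : (G.neighborFinset i).card = d i := hdeg i
    omega
  rw [Function.update_of_ne haj, Function.update_of_ne hai]
  by_cases hak : a = k
  · have hmemi : i ∈ G.neighborFinset k := by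
      simpa [SimpleGraph.mem_neighborFinset] using hik.symm
    rw [hak, hda k, hNk, Finset.card_insert_of_notMem (by
      simp [SimpleGraph.mem_neighborFinset, Finset.mem_erase, hkj']),
      Finset.card_erase_of_mem hmemi]
    have h1 : (G.neighborFinset k).card = d k := hdeg k
    have h2 : 1 ≤ (G.neighborFinset k).card := Finset.card_pos.2 ⟨i, hmemi⟩
    omega
  · rw [hda a, hNo a hai haj hak]
    exact hdeg a

lemma sum_three_split {n : ℕ} (h : Fin n → ℕ) (i j : Fin n) (hij : i ≠ j) :
    ∑ k, h k = h i + h j + ∑ k ∈ (Finset.univ.erase i).erase j, h k := by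
  rw [← Finset.add_sum_erase _ h (Finset.mem_univ i),
    ← Finset.add_sum_erase _ h (Finset.mem_erase.2 ⟨Ne.symm hij, Finset.mem_univ j⟩)]
  ring

lemma ruch_gutman_key {n : ℕ} : ∀ (m : ℕ) (α β : Fin n → ℕ),
    (∑ k, ((α k - β k) + (β k - α k))) ≤ m →
    Antitone α → Antitone β → (∑ i, α i = ∑ i, β i) →
    (∀ k : Fin n, ∑ i ∈ Finset.Iic k, β i ≤ ∑ i ∈ Finset.Iic k, α i) →
    IsGraphic α → IsGraphic β := by
  intro m
  induction m with
  | zero =>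
    intro α β hm hα hβ hsum hmaj hg
    have : α = β := by
      funext k
      have h1 : (α k - β k) + (β k - α k) = 0 := by
        have := Finset.sum_eq_zero_iff.1 (Nat.le_zero.1 hm) k (Finset.mem_univ k)
        omega
      omega
    rwa [← this]
  | succ m ih =>
    intro α β hm hα hβ hsum hmaj hg
    by_cases heq : α = β
    · rwa [← heq]
    -- first index where they differ
    have hSne : (Finset.univ.filter (fun k => α k ≠ β k)).Nonempty := by
      by_contra hc
      rw [Finset.not_nonempty_iff_eq_empty, Finset.filter_eq_empty_iff] at hc
      exact heq (funext fun k => not_not.1 (hc (Finset.mem_univ k)))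
    obtain ⟨i0, hi0mem, hi0min⟩ :
        ∃ x, (α x ≠ β x) ∧ ∀ y, α y ≠ β y → x ≤ y := by
      refine ⟨(Finset.univ.filter (fun k => α k ≠ β k)).min' hSne, ?_, ?_⟩
      · exact (Finset.mem_filter.1 (Finset.min'_mem _ hSne)).2
      · exact fun y hy => Finset.min'_le _ y (Finset.mem_filter.2 ⟨Finset.mem_univ y, hy⟩)
    have h_before : ∀ k, k < i0 → α k = β k := by
      intro k hk
      by_contra hc
      have := hi0min k hc
      omega
    have hβα_i0 : β i0 < α i0 := by
      have h1 := hmaj i0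
      have h2 : ∑ x ∈ Finset.Iio i0, β x = ∑ x ∈ Finset.Iio i0, α x :=
        Finset.sum_congr rfl (fun k hk => (h_before k (Finset.mem_Iio.1 hk)).symm)
      rw [← Finset.Iio_insert, Finset.sum_insert (by simp), Finset.sum_insert (by simp),
        h2] at h1
      have h3 := hi0mem
      omega
    -- first index where α < β
    have hTne : (Finset.univ.filter (fun k => α k < β k)).Nonempty := by
      by_contra hc
      rw [Finset.not_nonempty_iff_eq_empty, Finset.filter_eq_empty_iff] at hc
      have hlt : ∑ k, β k < ∑ k, α k := by
        apply Finset.sum_lt_sum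
        · intro k _
          have := hc (Finset.mem_univ k)
          omega
        · exact ⟨i0, Finset.mem_univ _, hβα_i0⟩
      omega
    obtain ⟨j0, hj0mem, hj0min⟩ :
        ∃ x, (α x < β x) ∧ ∀ y, α y < β y → x ≤ y := by
      refine ⟨(Finset.univ.filter (fun k => α k < β k)).min' hTne, ?_, ?_⟩
      · exact (Finset.mem_filter.1 (Finset.min'_mem _ hTne)).2
      · exact fun y hy => Finset.min'_le _ y (Finset.mem_filter.2 ⟨Finset.mem_univ y, hy⟩)
    have h_mid : ∀ k, k < j0 → β k ≤ α k := by
      intro k hk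
      by_contra hc
      have := hj0min k (by omega)
      omega
    have h_i0_lt_j0 : i0 < j0 := by
      rcases lt_trichotomy i0 j0 with h | h | h
      · exact h
      · rw [h] at hβα_i0
        have := hj0mem
        omega
      · have := h_before j0 h
        omega
    -- the actual transfer indices
    have hIne : (Finset.univ.filter (fun k => α k = α i0)).Nonempty :=
      ⟨i0, Finset.mem_filter.2 ⟨Finset.mem_univ _, rfl⟩⟩
    obtain ⟨i, hi_val, hi_max⟩ :
        ∃ x, (α x = α i0) ∧ ∀ y, α y = α i0 → y ≤ x := by
      refine ⟨(Finset.univ.filter (fun k => α k = α i0)).max' hIne, ?_, ?_⟩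
      · exact (Finset.mem_filter.1 (Finset.max'_mem _ hIne)).2
      · exact fun y hy => Finset.le_max' _ y (Finset.mem_filter.2 ⟨Finset.mem_univ y, hy⟩)
    have h_i0_le_i : i0 ≤ i := hi_max i0 rfl
    have hJne : (Finset.univ.filter (fun k => α k = α j0)).Nonempty :=
      ⟨j0, Finset.mem_filter.2 ⟨Finset.mem_univ _, rfl⟩⟩
    obtain ⟨j, hj_val, hj_min⟩ :
        ∃ x, (α x = α j0) ∧ ∀ y, α y = α j0 → x ≤ y := by
      refine ⟨(Finset.univ.filter (fun k => α k = α j0)).min' hJne, ?_, ?_⟩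
      · exact (Finset.mem_filter.1 (Finset.min'_mem _ hJne)).2
      · exact fun y hy => Finset.min'_le _ y (Finset.mem_filter.2 ⟨Finset.mem_univ y, hy⟩)
    have h_j_le_j0 : j ≤ j0 := hj_min j0 rfl
    have hβi : β i < α i := by
      have h1 : β i ≤ β i0 := hβ h_i0_le_i
      omega
    have hβj : α j < β j := by
      have h1 : β j0 ≤ β j := hβ h_j_le_j0
      omega
    have hij : i < j := by
      have h1 : β j0 ≤ β i0 := hβ (le_of_lt h_i0_lt_j0)
      have h2 : α j < α i := by omega
      by_contra hc
      have := hα (not_lt.1 hc)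
      omega
    have hne_ij : i ≠ j := ne_of_lt hij
    have hgap : α j + 2 ≤ α i := by
      have h1 : β j ≤ β i := hβ (le_of_lt hij)
      omega
    have F1 : ∀ k, i < k → α k < α i := by
      intro k hk
      have h1 : α k ≤ α i := hα (le_of_lt hk)
      rcases lt_or_eq_of_le h1 with h | h
      · exact h
      · exfalso
        have := hi_max k (by omega)
        omega
    have F2 : ∀ k, k < j → α j < α k := by
      intro k hk
      have h1 : α j ≤ α k := hα (le_of_lt hk)
      rcases lt_or_eq_of_le h1 with h | h
      · exact h
      · exfalso
        have := hj_min k (by omega)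
        omega
    set α' := Function.update (Function.update α i (α i - 1)) j (α j + 1) with hα'def
    have hα'j : α' j = α j + 1 := Function.update_self _ _ _
    have hα'i : α' i = α i - 1 := by
      rw [hα'def, Function.update_of_ne hne_ij, Function.update_self]
    have hα'o : ∀ k, k ≠ i → k ≠ j → α' k = α k := by
      intro k h1 h2
      rw [hα'def, Function.update_of_ne h2, Function.update_of_ne h1]
    -- α' is antitone
    have hαnt' : Antitone α' := by
      intro a b hab
      rcases eq_or_lt_of_le hab with rfl | hlt
      · exact le_refl _
      by_cases hai : a = i
      · by_cases hbj : b = j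
        · rw [hai, hbj, hα'i, hα'j]; omega
        · have hbi : b ≠ i := by rw [hai] at hlt; exact ne_of_gt hlt
          rw [hai, hα'i, hα'o b hbi hbj]
          have := F1 b (hai ▸ hlt)
          omega
      by_cases haj : a = j
      · have hbj : b ≠ j := by rw [haj] at hlt; exact ne_of_gt hlt
        have hbi : b ≠ i := by
          rw [haj] at hlt
          exact fun h => absurd (h ▸ hlt) (by simp [not_lt.2 (le_of_lt hij)])
        rw [haj, hα'j, hα'o b hbi hbj]
        have : α b ≤ α j := hα (haj ▸ le_of_lt hlt)
        omega
      by_cases hbi : b = i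
      · rw [hbi, hα'i, hα'o a hai haj]
        have : α i ≤ α a := hα (hbi ▸ le_of_lt hlt)
        omega
      by_cases hbj : b = j
      · rw [hbj, hα'j, hα'o a hai haj]
        have := F2 a (hbj ▸ hlt)
        omega
      · rw [hα'o a hai haj, hα'o b hbi hbj]
        exact hα hab
    -- sums of α' over arbitrary finsets
    have key_s : ∀ s : Finset (Fin n), (∑ k ∈ s, α' k) + (if i ∈ s then 1 else 0)
        = (∑ k ∈ s, α k) + (if j ∈ s then 1 else 0) := by
      intro s
      by_cases hi : i ∈ s <;> by_cases hj : j ∈ s <;> simp only [hi, hj, if_true, if_false]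
      · rw [hα'def, Finset.sum_update_of_mem hj, Finset.sum_update_of_mem
          (Finset.mem_sdiff.2 ⟨hi, by simp [hne_ij]⟩)]
        have e1 : ∑ k ∈ s, α k = ∑ k ∈ s \ {j}, α k + α j := by
          rw [Finset.sum_eq_sum_sdiff_singleton_add hj]
        have e2 : ∑ k ∈ s \ {j}, α k = ∑ k ∈ (s \ {j}) \ {i}, α k + α i := by
          rw [Finset.sum_eq_sum_sdiff_singleton_add (Finset.mem_sdiff.2 ⟨hi, by simp [hne_ij]⟩)]
        omega
      · rw [hα'def, Finset.sum_update_of_notMem hj, Finset.sum_update_of_mem hi]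
        have e1 : ∑ k ∈ s, α k = ∑ k ∈ s \ {i}, α k + α i := by
          rw [Finset.sum_eq_sum_sdiff_singleton_add hi]
        omega
      · rw [hα'def, Finset.sum_update_of_mem hj, Finset.sum_update_of_notMem
          (by simp [hi] : i ∉ s \ {j})]
        have e1 : ∑ k ∈ s, α k = ∑ k ∈ s \ {j}, α k + α j := by
          rw [Finset.sum_eq_sum_sdiff_singleton_add hj]
        omega
      · rw [hα'def, Finset.sum_update_of_notMem hj, Finset.sum_update_of_notMem hi]
    -- total sum preserved
    have hsum' : ∑ k, α' k = ∑ k, β k := by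
      have := key_s Finset.univ
      simp only [Finset.mem_univ, if_true] at this
      omega
    -- strict prefix inequality on [i0, j0)
    have hstrict : ∀ k : Fin n, i ≤ k → k < j → ∑ x ∈ Finset.Iic k, β x < ∑ x ∈ Finset.Iic k, α x := by
      intro k hik hkj
      apply Finset.sum_lt_sum
      · intro x hx
        have hxk : x ≤ k := Finset.mem_Iic.1 hx
        exact h_mid x (by omega)
      · exact ⟨i0, Finset.mem_Iic.2 (le_trans h_i0_le_i hik), hβα_i0⟩
    -- majorization for α'
    have hmaj' : ∀ k : Fin n, ∑ x ∈ Finset.Iic k, β x ≤ ∑ x ∈ Finset.Iic k, α' x := by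
      intro k
      have hk := key_s (Finset.Iic k)
      simp only [Finset.mem_Iic] at hk
      by_cases hjk : j ≤ k
      · rw [if_pos hjk, if_pos (le_trans (le_of_lt hij) hjk)] at hk
        have := hmaj k
        omega
      by_cases hik : i ≤ k
      · rw [if_pos hik, if_neg hjk] at hk
        have := hstrict k hik (not_le.1 hjk)
        omega
      · rw [if_neg hik, if_neg hjk] at hk
        have := hmaj k
        omega
    -- measure decreases
    have hmeas : (∑ k, ((α' k - β k) + (β k - α' k))) ≤ m := by
      have e1 := sum_three_split (fun k => (α' k - β k) + (β k - α' k)) i j hne_ij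
      have e2 := sum_three_split (fun k => (α k - β k) + (β k - α k)) i j hne_ij
      have e3 : ∑ k ∈ (Finset.univ.erase i).erase j, ((α' k - β k) + (β k - α' k))
          = ∑ k ∈ (Finset.univ.erase i).erase j, ((α k - β k) + (β k - α k)) := by
        apply Finset.sum_congr rfl
        intro x hx
        rw [Finset.mem_erase, Finset.mem_erase] at hx
        rw [hα'o x hx.2.1 hx.1]
      rw [e3, hα'i, hα'j] at e1
      omega
    -- conclude via the induction hypothesis and the transfer lemma
    exact ih α' β hmeas hαnt' hβ hsum' hmaj' (graphic_transfer (by omega : α j < α i) hg)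

/-- Ruch–Gutman: if a graphic sequence `α` majorizes `β` (same length and sum),
then `β` is graphic. -/
theorem stmt_4 {n : ℕ} (α β : Fin n → ℕ) (hα : Antitone α) (hβ : Antitone β)
    (hsum : ∑ i, α i = ∑ i, β i)
    (hmaj : ∀ k : Fin n, ∑ i ∈ Finset.Iic k, β i ≤ ∑ i ∈ Finset.Iic k, α i)
    (hg : IsGraphic α) : IsGraphic β :=
  ruch_gutman_key (∑ k, ((α k - β k) + (β k - α k))) α β le_rfl hα hβ hsum hmaj hg
end

section
/- If (α₁ + αₙ + 1)²/4 ≤ n·αₙ (with α₁ ≥ αₙ > 0 and α₁ ≤ n-1), then for every even s with n·αₙ < s < n·α₁, the inequality (α₁ - αₙ)·((n - α₁ - 1)/(n·α₁ - s) + αₙ/(s - n·αₙ)) ≥ 1 holds. Hence the Zverovich–Zverovich condition implies the generalized condition. -/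
/-- The Zverovich–Zverovich condition implies the generalized bound inequality
for every admissible even sum. -/
theorem stmt_9 (a1 an n : ℕ) (hpos : 0 < an) (hord : an ≤ a1) (hcap : a1 + 1 ≤ n)
    (hzz : ((a1 : ℚ) + an + 1) ^ 2 / 4 ≤ (n : ℚ) * an) :
    ∀ s : ℕ, Even s → n * an < s → s < n * a1 →
      ((a1 : ℚ) - an) *
        (((n : ℚ) - a1 - 1) / ((n : ℚ) * a1 - s) + (an : ℚ) / ((s : ℚ) - n * an)) ≥ 1 := by
  intro s _ h1 h2
  have h1' : (n : ℚ) * an < s := by exact_mod_cast h1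
  have h2' : (s : ℚ) < n * a1 := by exact_mod_cast h2
  have hcap' : (a1 : ℚ) + 1 ≤ n := by exact_mod_cast hcap
  set A : ℚ := (n : ℚ) * a1 - s with hA
  set B : ℚ := (s : ℚ) - n * an with hB
  have hApos : 0 < A := by simp [hA]; linarith
  have hBpos : 0 < B := by simp [hB]; linarith
  clear_value A B
  have hAe : A = (n : ℚ) * ((a1 : ℚ) - an) - B := by rw [hA, hB]; ring
  rw [ge_iff_le, div_add_div _ _ (ne_of_gt hApos) (ne_of_gt hBpos),
    ← mul_div_assoc, le_div_iff₀ (mul_pos hApos hBpos), hAe]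
  have key : 0 ≤ ((a1 : ℚ) - an) ^ 2 * (4 * n * an - ((a1 : ℚ) + an + 1) ^ 2) :=
    mul_nonneg (sq_nonneg _) (by linarith)
  nlinarith [sq_nonneg (2 * B - ((a1 : ℚ) - an) * ((a1 : ℚ) + an + 1)), key]
end

section
/- For every integer m ≥ 3, the sequence (m, m, 3, 2, 2, ..., 2, 1) of length m+1 with m-3 twos is not graphic. -/
/-- The sequence `(m, m, 3, 2, ..., 2, 1)` of length `m+1` (with `m-3` twos)
is not graphic. -/
theorem stmt_12 (m : ℕ) (hm : 3 ≤ m) :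
    ¬ IsGraphic (fun i : Fin (m + 1) =>
      if (i : ℕ) ≤ 1 then m else if (i : ℕ) = 2 then 3
      else if (i : ℕ) = m then 1 else 2) := by
  rintro ⟨G, _, hdeg⟩
  set v0 : Fin (m + 1) := ⟨0, by omega⟩
  set v1 : Fin (m + 1) := ⟨1, by omega⟩
  set vm : Fin (m + 1) := ⟨m, by omega⟩
  have hd0 : G.degree v0 = m := by simpa [v0] using hdeg v0
  have hd1 : G.degree v1 = m := by simpa [v1] using hdeg v1
  have hdm : G.degree vm = 1 := by
    have := hdeg vm
    simp only [vm] at this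
    rw [if_neg (by omega), if_neg (by omega)] at this
    simpa using this
  -- a vertex of degree m is adjacent to every other vertex
  have key : ∀ v : Fin (m + 1), G.degree v = m → ∀ w, w ≠ v → G.Adj v w := by
    intro v hv w hw
    have hsub : G.neighborFinset v ⊆ Finset.univ.erase v := by
      intro x hx
      simp only [Finset.mem_erase, Finset.mem_univ, and_true]
      exact (G.ne_of_adj ((SimpleGraph.mem_neighborFinset G v x).mp hx)).symm
    have hcard : (Finset.univ.erase v).card ≤ (G.neighborFinset v).card := by
      rw [Finset.card_erase_of_mem (Finset.mem_univ v)]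
      simp [SimpleGraph.card_neighborFinset_eq_degree, hv]
    have heq := Finset.eq_of_subset_of_card_le hsub hcard
    have : w ∈ G.neighborFinset v := by
      rw [heq]; exact Finset.mem_erase.mpr ⟨hw, Finset.mem_univ w⟩
    exact (SimpleGraph.mem_neighborFinset G v w).mp this
  have h0m : G.Adj v0 vm := key v0 hd0 vm (by simp [v0, vm, Fin.ext_iff]; omega)
  have h1m : G.Adj v1 vm := key v1 hd1 vm (by simp [v1, vm, Fin.ext_iff]; omega)
  have hsub : ({v0, v1} : Finset (Fin (m + 1))) ⊆ G.neighborFinset vm := by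
    intro x hx
    simp only [Finset.mem_insert, Finset.mem_singleton] at hx
    rcases hx with rfl | rfl
    · exact (SimpleGraph.mem_neighborFinset G vm v0).mpr h0m.symm
    · exact (SimpleGraph.mem_neighborFinset G vm v1).mpr h1m.symm
  have h2 : 2 ≤ G.degree vm := by
    rw [← SimpleGraph.card_neighborFinset_eq_degree]
    calc 2 = ({v0, v1} : Finset (Fin (m + 1))).card := by
            rw [Finset.card_insert_of_notMem (by simp [v0, v1, Fin.ext_iff]),
              Finset.card_singleton]
      _ ≤ _ := Finset.card_le_card hsub
  omega
end

section
/- Every nonincreasing sequence α = (α₁, ..., αₙ) of nonnegative integers with even sum, α₁ ≤ n - 1, and α₁ - αₙ ≤ 1 is graphic. -/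
open Finset

namespace ChenAux

/-- cyclic offset from `i` to `j` in `Fin n`. -/
def off {n : ℕ} (i j : Fin n) : ℕ :=
  if i.val ≤ j.val then j.val - i.val else j.val + n - i.val

def adjP (n : ℕ) (Off : Finset ℕ) (h t : ℕ) (i j : Fin n) : Prop :=
  off i j ∈ Off ∨ (i.val < h ∧ j.val = i.val + t) ∨ (j.val < h ∧ i.val = j.val + t)

instance (n : ℕ) (Off : Finset ℕ) (h t : ℕ) : DecidableRel (adjP n Off h t) := fun i j => by
  unfold adjP off; infer_instance

lemma construct (n : ℕ) (Off : Finset ℕ) (t h : ℕ)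
    (hOff : ∀ o ∈ Off, 1 ≤ o ∧ o ≤ n - 1) (hsym : ∀ o ∈ Off, n - o ∈ Off)
    (ht0 : 0 < t) (hht : h ≤ t) (hhtn : h + t ≤ n) (htOff : t ∉ Off) (hntOff : n - t ∉ Off) :
    IsGraphic (fun i : Fin n =>
      Off.card + (if i.val < h ∨ (t ≤ i.val ∧ i.val < t + h) then 1 else 0)) := by
  have hon : ∀ o ∈ Off, 1 ≤ o ∧ o < n := by
    intro o ho; have := hOff o ho; omega
  have hs : Symmetric (adjP n Off h t) := by
    intro i j hij
    rcases hij with hc | hm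
    · left
      have h1 := hon _ hc
      have hij : i.val ≠ j.val := by
        by_contra hh
        simp only [off, hh, le_refl, if_true, Nat.sub_self] at h1
        omega
      have : off j i = n - off i j := by
        have hi := i.isLt; have hj := j.isLt
        simp only [off]; split_ifs <;> omega
      rw [this]; exact hsym _ hc
    · right; tauto
  have hl : Irreflexive (adjP n Off h t) := by
    intro i hi
    rcases hi with hc | hm
    · have := hon _ hc
      simp only [off, le_refl, if_true, Nat.sub_self] at this
      omega
    · omega
  refine ⟨⟨adjP n Off h t, ⟨fun _ _ hh => hs hh⟩, ⟨hl⟩⟩, inferInstanceAs (DecidableRel (adjP n Off h t)), ?_⟩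
  · -- degrees
    intro i
    have hi := i.isLt
    have hdeg : _root_.SimpleGraph.degree (⟨adjP n Off h t, ⟨fun _ _ hh => hs hh⟩, ⟨hl⟩⟩ : SimpleGraph (Fin n)) i
        = (({w | adjP n Off h t i w} : Finset (Fin n))).card := by
      rw [SimpleGraph.degree, SimpleGraph.neighborFinset_eq_filter]
    rw [hdeg]
    have hsplit : ({w | adjP n Off h t i w} : Finset (Fin n)) =
        ({w | off i w ∈ Off} : Finset (Fin n)) ∪
        ({w | (i.val < h ∧ w.val = i.val + t) ∨ (w.val < h ∧ i.val = w.val + t)} :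
          Finset (Fin n)) := by
      ext w; simp only [mem_filter, mem_univ, true_and, mem_union]; exact Iff.rfl
    have hdisj : Disjoint ({w | off i w ∈ Off} : Finset (Fin n))
        ({w | (i.val < h ∧ w.val = i.val + t) ∨ (w.val < h ∧ i.val = w.val + t)} :
          Finset (Fin n)) := by
      rw [Finset.disjoint_left]
      intro w hw1 hw2
      simp only [mem_filter, mem_univ, true_and] at hw1 hw2
      have hw := w.isLt
      rcases hw2 with ⟨hh1, hh2⟩ | ⟨hh1, hh2⟩
      · have : off i w = t := by simp only [off]; split_ifs <;> omega
        rw [this] at hw1; exact htOff hw1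
      · have : off i w = n - t := by simp only [off]; split_ifs <;> omega
        rw [this] at hw1; exact hntOff hw1
    have hc1 : (({w | off i w ∈ Off} : Finset (Fin n))).card = Off.card := by
      refine Finset.card_bij (fun w _ => off i w) ?_ ?_ ?_
      · intro w hw; simpa using hw
      · intro w hw w' hw' hww
        have := w.isLt; have := w'.isLt
        simp only [off] at hww
        have : w.val = w'.val := by split_ifs at hww <;> omega
        exact Fin.ext this
      · intro o ho
        have h1 := hon _ ho
        refine ⟨⟨if i.val + o < n then i.val + o else i.val + o - n, by split <;> omega⟩, ?_, ?_⟩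
        · simp only [mem_filter, mem_univ, true_and]
          have : off i ⟨if i.val + o < n then i.val + o else i.val + o - n, by split <;> omega⟩ = o := by
            simp only [off]; split_ifs <;> omega
          rw [this]; exact ho
        · simp only [off]; split_ifs <;> omega
    have hc2 : (({w | (i.val < h ∧ w.val = i.val + t) ∨ (w.val < h ∧ i.val = w.val + t)} :
          Finset (Fin n))).card
        = (if i.val < h ∨ (t ≤ i.val ∧ i.val < t + h) then 1 else 0) := by
      by_cases h1 : i.val < h
      · have he : ({w | (i.val < h ∧ w.val = i.val + t) ∨ (w.val < h ∧ i.val = w.val + t)} :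
            Finset (Fin n)) = {⟨i.val + t, by omega⟩} := by
          ext w
          have hw := w.isLt
          simp only [mem_filter, mem_univ, true_and, mem_singleton, Fin.ext_iff]
          constructor
          · rintro (⟨_, hh⟩ | ⟨hh1, hh2⟩) <;> omega
          · intro hh; left; omega
        rw [he, if_pos (Or.inl h1)]
        simp
      · by_cases h2 : t ≤ i.val ∧ i.val < t + h
        · have he : ({w | (i.val < h ∧ w.val = i.val + t) ∨ (w.val < h ∧ i.val = w.val + t)} :
              Finset (Fin n)) = {⟨i.val - t, by omega⟩} := by
            ext w
            have hw := w.isLt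
            simp only [mem_filter, mem_univ, true_and, mem_singleton, Fin.ext_iff]
            constructor
            · rintro (⟨hh, _⟩ | ⟨hh1, hh2⟩) <;> omega
            · intro hh; right; omega
          rw [he, if_pos (Or.inr h2)]
          simp
        · have he : ({w | (i.val < h ∧ w.val = i.val + t) ∨ (w.val < h ∧ i.val = w.val + t)} :
              Finset (Fin n)) = ∅ := by
            ext w
            have hw := w.isLt
            simp only [mem_filter, mem_univ, true_and, notMem_empty, iff_false]
            rintro (⟨hh, _⟩ | ⟨hh1, hh2⟩) <;> omega
          rw [he, if_neg (by tauto)]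
          simp
    rw [hsplit, card_union_of_disjoint hdisj, hc1, hc2]


lemma isGraphic_comp {n : ℕ} (d : Fin n → ℕ) (f : Fin n → Fin n)
    (hf : Function.Bijective f) (hd : IsGraphic d) : IsGraphic (d ∘ f) := by
  obtain ⟨G, inst, hG⟩ := hd
  refine ⟨⟨fun i j => G.Adj (f i) (f j), ⟨fun i j hij => G.adj_symm hij⟩,
      ⟨fun i hii => G.irrefl hii⟩⟩, fun i j => inst (f i) (f j), ?_⟩
  intro i
  have hdeg : _root_.SimpleGraph.degree
      (⟨fun i j => G.Adj (f i) (f j), ⟨fun i j hij => G.adj_symm hij⟩,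
        ⟨fun i hii => G.irrefl hii⟩⟩ : SimpleGraph (Fin n)) i
      = (({w | G.Adj (f i) (f w)} : Finset (Fin n))).card := by
    rw [SimpleGraph.degree, SimpleGraph.neighborFinset_eq_filter]
  rw [hdeg]
  have : (({w | G.Adj (f i) (f w)} : Finset (Fin n))).card
      = (({w | G.Adj (f i) w} : Finset (Fin n))).card := by
    refine Finset.card_bij (fun w _ => f w) ?_ ?_ ?_
    · intro w hw; simp only [mem_filter, mem_univ, true_and] at hw ⊢; exact hw
    · intro w _ w' _ hww; exact hf.injective hww
    · intro w hw
      obtain ⟨w', hw'⟩ := hf.surjective w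
      refine ⟨w', ?_, hw'⟩
      simp only [mem_filter, mem_univ, true_and] at hw ⊢
      rw [hw']; exact hw
  rw [this]
  have hdeg2 : G.degree (f i) = (({w | G.Adj (f i) w} : Finset (Fin n))).card := by
    rw [SimpleGraph.degree, SimpleGraph.neighborFinset_eq_filter]
  rw [← hdeg2, hG]
  rfl

lemma isGraphic_compl {n : ℕ} (d : Fin n → ℕ) (h : IsGraphic d) :
    IsGraphic (fun i => n - 1 - d i) := by
  obtain ⟨G, inst, hG⟩ := h
  refine ⟨Gᶜ, fun i j => inferInstanceAs (Decidable (i ≠ j ∧ ¬ G.Adj i j)), ?_⟩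
  intro i
  rw [SimpleGraph.degree_compl, hG, Fintype.card_fin]


def step (n k m : ℕ) : Fin n → ℕ := fun i => if i.val < m then k + 1 else k

/-- unscramble the two intervals `[0,h) ∪ [t, t+h)` to `[0, 2h)`. -/
lemma stepT_to_step (n k h t : ℕ) (hht : h ≤ t) (hhtn : t + h ≤ n)
    (hg : IsGraphic (fun i : Fin n =>
      k + (if i.val < h ∨ (t ≤ i.val ∧ i.val < t + h) then 1 else 0))) :
    IsGraphic (step n k (2 * h)) := by
  set f : Fin n → Fin n := fun i =>
    ⟨if i.val < h then i.val else if i.val < 2 * h then i.val - h + t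
      else if i.val < h + t then i.val - h else i.val, by
        have := i.isLt; split_ifs <;> omega⟩ with hf
  have hinj : Function.Injective f := by
    intro a b hab
    have ha := a.isLt; have hb := b.isLt
    rw [hf, Fin.mk.injEq] at hab
    have : a.val = b.val := by split_ifs at hab <;> omega
    exact Fin.ext this
  have hbij : Function.Bijective f := Finite.injective_iff_bijective.mp hinj
  have := isGraphic_comp _ f hbij hg
  convert this using 1
  funext i
  have hi := i.isLt
  simp only [step, Function.comp_apply]
  have hcond : ((f i).val < h ∨ (t ≤ (f i).val ∧ (f i).val < t + h)) ↔ i.val < 2 * h := by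
    simp only [hf]
    split_ifs <;> omega
  by_cases hc : i.val < 2 * h
  · rw [if_pos hc, if_pos (hcond.mpr hc)]
  · rw [if_neg hc, if_neg (fun hh => hc (hcond.mp hh))]; omega


lemma core_even (n k m : ℕ) (hn : 0 < n) (hk2 : k % 2 = 0) (hm2 : m % 2 = 0)
    (hkn : k ≤ n - 1) (hmn : m ≤ n - 1) (hm0 : 0 < m → k + 2 ≤ n) :
    IsGraphic (step n k m) := by
  set t : ℕ := if m = 0 then n else n / 2 with htdef
  set Off : Finset ℕ := Finset.Icc 1 (k / 2) ∪ Finset.Icc (n - k / 2) (n - 1) with hOffdef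
  have hmem : ∀ o, o ∈ Off ↔ (1 ≤ o ∧ o ≤ k / 2) ∨ (n - k / 2 ≤ o ∧ o ≤ n - 1) := by
    intro o; simp [hOffdef, Finset.mem_Icc]
  have hcard : Off.card = k := by
    rw [hOffdef, card_union_of_disjoint, Nat.card_Icc, Nat.card_Icc]
    · omega
    · rw [Finset.disjoint_left]
      intro o h1 h2
      rw [Finset.mem_Icc] at h1 h2
      omega
  have hg := construct n Off t (m / 2) ?_ ?_ ?_ ?_ ?_ ?_ ?_
  · rw [hcard] at hg
    have := stepT_to_step n k (m / 2) t ?_ ?_ hg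
    · have h2 : 2 * (m / 2) = m := by omega
      rwa [h2] at this
    · by_cases hm : m = 0 <;> simp [htdef, hm] <;> omega
    · by_cases hm : m = 0 <;> simp [htdef, hm] <;> omega
  · intro o ho; rw [hmem] at ho; omega
  · intro o ho; rw [hmem] at ho ⊢; omega
  · by_cases hm : m = 0 <;> simp [htdef, hm] <;> omega
  · by_cases hm : m = 0 <;> simp [htdef, hm] <;> omega
  · by_cases hm : m = 0 <;> simp [htdef, hm] <;> omega
  · rw [hmem]
    by_cases hm : m = 0 <;> simp [htdef, hm] <;> [omega; skip]
    have := hm0 (by omega); omega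
  · rw [hmem]
    by_cases hm : m = 0 <;> simp [htdef, hm] <;> [omega; skip]
    have := hm0 (by omega); omega

lemma core_oddeven (n k m : ℕ) (hn : 0 < n) (hk2 : k % 2 = 1) (hn2 : n % 2 = 0)
    (hm2 : m % 2 = 0) (hkn : k ≤ n - 1) (hmn : m ≤ n - 1) (hm0 : 0 < m → k + 2 ≤ n) :
    IsGraphic (step n k m) := by
  set t : ℕ := if m = 0 then n else n / 2 - 1 with htdef
  set Off : Finset ℕ :=
    insert (n / 2) (Finset.Icc 1 (k / 2) ∪ Finset.Icc (n - k / 2) (n - 1)) with hOffdef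
  have hmem : ∀ o, o ∈ Off ↔
      o = n / 2 ∨ (1 ≤ o ∧ o ≤ k / 2) ∨ (n - k / 2 ≤ o ∧ o ≤ n - 1) := by
    intro o; simp [hOffdef, Finset.mem_Icc]
  have hcard : Off.card = k := by
    rw [hOffdef, Finset.card_insert_of_notMem, card_union_of_disjoint, Nat.card_Icc,
      Nat.card_Icc]
    · omega
    · rw [Finset.disjoint_left]
      intro o h1 h2
      rw [Finset.mem_Icc] at h1 h2
      omega
    · simp only [Finset.mem_union, Finset.mem_Icc]
      omega
  have hg := construct n Off t (m / 2) ?_ ?_ ?_ ?_ ?_ ?_ ?_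
  · rw [hcard] at hg
    have := stepT_to_step n k (m / 2) t ?_ ?_ hg
    · have h2 : 2 * (m / 2) = m := by omega
      rwa [h2] at this
    · by_cases hm : m = 0 <;> simp [htdef, hm] <;> omega
    · by_cases hm : m = 0 <;> simp [htdef, hm] <;> omega
  · intro o ho; rw [hmem] at ho; omega
  · intro o ho; rw [hmem] at ho ⊢; omega
  · by_cases hm : m = 0 <;> simp [htdef, hm] <;> [omega; skip]
    have := hm0 (by omega); omega
  · by_cases hm : m = 0 <;> simp [htdef, hm] <;> omega
  · by_cases hm : m = 0 <;> simp [htdef, hm] <;> omega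
  · rw [hmem]
    by_cases hm : m = 0 <;> simp [htdef, hm] <;> [omega; skip]
    have := hm0 (by omega); omega
  · rw [hmem]
    by_cases hm : m = 0 <;> simp [htdef, hm] <;> [omega; skip]
    have := hm0 (by omega); omega

lemma core (n k m : ℕ) (hn : 0 < n) (heven : (n * k + m) % 2 = 0)
    (hkn : k ≤ n - 1) (hmn : m ≤ n - 1) (hm0 : 0 < m → k + 2 ≤ n) :
    IsGraphic (step n k m) := by
  rcases Nat.even_or_odd k with hk | hk
  · have hk2 : k % 2 = 0 := Nat.even_iff.mp hk
    have hnk : (n * k) % 2 = 0 := by rw [Nat.mul_mod, hk2]; simp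
    exact core_even n k m hn hk2 (by omega) hkn hmn hm0
  · have hk2 : k % 2 = 1 := Nat.odd_iff.mp hk
    rcases Nat.even_or_odd n with hne | hno
    · have hn2 : n % 2 = 0 := Nat.even_iff.mp hne
      have hnk : (n * k) % 2 = 0 := by rw [Nat.mul_mod, hn2]; simp
      exact core_oddeven n k m hn hk2 hn2 (by omega) hkn hmn hm0
    · have hn2 : n % 2 = 1 := Nat.odd_iff.mp hno
      have hnk : (n * k) % 2 = 1 := by rw [Nat.mul_mod, hn2, hk2]
      have hm1 : m % 2 = 1 := by omega
      have hkk : k + 2 ≤ n := hm0 (by omega)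
      have h1 : IsGraphic (step n (n - 2 - k) (n - m)) := by
        refine core_even n (n - 2 - k) (n - m) hn (by omega) (by omega) (by omega)
          (by omega) (by omega)
      have h2 := isGraphic_compl _ h1
      have h3 := isGraphic_comp _ (fun i : Fin n => ⟨n - 1 - i.val, by omega⟩)
        (Finite.injective_iff_bijective.mp (by
          intro a b hab
          have ha := a.isLt; have hb := b.isLt
          rw [Fin.mk.injEq] at hab
          exact Fin.ext (by omega))) h2
      convert h3 using 1
      funext i
      have hi := i.isLt
      simp only [step, Function.comp_apply]
      split_ifs <;> omega


end ChenAux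

/-- Chen's lemma: a near-regular nonincreasing sequence (max and min differ by at
most 1) with even sum and entries at most `n-1` is graphic. -/
theorem stmt_14 {n : ℕ} (hn : 0 < n) (α : Fin n → ℕ) (hα : Antitone α)
    (heven : Even (∑ i, α i)) (hcap : α ⟨0, hn⟩ + 1 ≤ n)
    (hnear : α ⟨0, hn⟩ ≤ α ⟨n - 1, by omega⟩ + 1) :
    IsGraphic α := by
  set k := α ⟨n - 1, by omega⟩ with hk
  have hub : ∀ i : Fin n, α i ≤ k + 1 := by
    intro i
    have h1 : α i ≤ α ⟨0, hn⟩ := hα (by rw [Fin.le_def]; exact Nat.zero_le _)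
    omega
  have hlb : ∀ i : Fin n, k ≤ α i := by
    intro i
    exact hα (by rw [Fin.le_def]; have := i.isLt; simp; omega)
  set m := (univ.filter (fun i : Fin n => α i = k + 1)).card with hm
  have key : ∀ i : Fin n, α i = k + 1 ↔ i.val < m := by
    intro i
    constructor
    · intro hi
      have hsub : Finset.Iic i ⊆ univ.filter (fun j : Fin n => α j = k + 1) := by
        intro j hj
        rw [Finset.mem_Iic] at hj
        rw [Finset.mem_filter]
        refine ⟨Finset.mem_univ _, ?_⟩
        have := hα hj
        have := hub j
        omega
      have := Finset.card_le_card hsub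
      rw [Fin.card_Iic] at this
      omega
    · intro hi
      by_contra hne
      have hsub : univ.filter (fun j : Fin n => α j = k + 1) ⊆ Finset.Iio i := by
        intro j hj
        rw [Finset.mem_filter] at hj
        obtain ⟨-, hj2⟩ := hj
        rw [Finset.mem_Iio]
        by_contra hji
        have h4 : α j ≤ α i := hα (le_of_not_gt hji)
        have h5 := hub i
        omega
      have := Finset.card_le_card hsub
      rw [Fin.card_Iio] at this
      omega
  have hstep : α = ChenAux.step n k m := by
    funext i
    simp only [ChenAux.step]
    by_cases hc : i.val < m
    · rw [if_pos hc]; exact (key i).mpr hc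
    · rw [if_neg hc]
      have h1 := hub i
      have h2 := hlb i
      have h3 : α i ≠ k + 1 := fun hh => hc ((key i).mp hh)
      omega
  have hmn : m ≤ n - 1 := by
    have h1 : ¬ (n - 1 < m) := by
      intro hh
      have := (key ⟨n - 1, by omega⟩).mpr hh
      omega
    omega
  have hsum : ∑ i, α i = n * k + m := by
    rw [hstep]
    have h1 : ∀ i : Fin n, ChenAux.step n k m i = k + (if i.val < m then 1 else 0) := by
      intro i; simp only [ChenAux.step]; split_ifs <;> omega
    rw [Finset.sum_congr rfl (fun i _ => h1 i), Finset.sum_add_distrib, Finset.sum_const,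
      Finset.sum_boole, card_univ, Fintype.card_fin, smul_eq_mul]
    have h2 : (univ.filter fun i : Fin n => i.val < m) = univ.filter (fun i => α i = k + 1) := by
      ext j; simp only [Finset.mem_filter, Finset.mem_univ, true_and]
      exact (key j).symm
    rw [Nat.cast_id, h2, ← hm]
  have heven' : (n * k + m) % 2 = 0 := by
    rw [← hsum]; exact Nat.even_iff.mp heven
  have hkn : k ≤ n - 1 := by
    have := hlb ⟨0, hn⟩
    omega
  have hm0 : 0 < m → k + 2 ≤ n := by
    intro hmm
    have h1 : α ⟨0, hn⟩ = k + 1 := (key ⟨0, hn⟩).mpr hmm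
    rw [h1] at hcap
    omega
  rw [hstep]
  exact ChenAux.core n k m hn heven' hkn hmn hm0
end

section
/- The sequence (8, 6, 6, 6, 6, 6, 6, 6) of length 8 satisfies the inequality (α₁ - αₙ)·((n - α₁ - 1)/(n·α₁ - s) + αₙ/(s - n·αₙ)) ≥ 1 but is not graphic. -/
/-- The sequence `(8, 6, 6, 6, 6, 6, 6, 6)` satisfies the bound inequality
(with `α₁ = 8`, `αₙ = 6`, `n = 8`, `s = 50`) but is not graphic. -/
theorem stmt_16 :
    (((8 : ℚ) - 6) * (((8 : ℚ) - 8 - 1) / ((8 : ℚ) * 8 - 50) + (6 : ℚ) / ((50 : ℚ) - 8 * 6)) ≥ 1)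
    ∧ ¬ IsGraphic (fun i : Fin 8 => if (i : ℕ) = 0 then 8 else 6) := by
  constructor
  · norm_num
  · rintro ⟨G, _, h⟩
    have h0 := h 0
    simp at h0
    have := G.degree_lt_card_verts 0
    simp [Fintype.card_fin] at this
    omega
end

section
/- Let α' = (α₁ repeated p times, β, αₙ repeated n-p-1 times) be nonincreasing with α₁ > β > αₙ ≥ 0 or αₙ ≤ β ≤ α₁, even sum, and α₁ ≤ n-1. If the Erdős–Gallai inequalities hold at k = p and k = p + 1, then α' is graphic. -/
set_option maxHeartbeats 1000000

def ErdosGallaiIneq {n : ℕ} (α : Fin n → ℕ) (k : ℕ) : Prop :=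
  ∑ i ∈ Finset.univ.filter (fun i : Fin n => (i : ℕ) < k), α i ≤
    k * (k - 1) + ∑ i ∈ Finset.univ.filter (fun i : Fin n => k ≤ (i : ℕ)), min k (α i)

open Finset




/-- The 2-switch: given edges xy, uw and non-edges xu, yw (all four vertices distinct),
we can modify G to remove xy, uw and add xu, yw, preserving all degrees. -/
lemma switch_lemma (G : SimpleGraph (Fin n)) [inst : DecidableRel G.Adj]
    (x y u w : Fin n)
    (hxy : x ≠ y) (hxu : x ≠ u) (hxw : x ≠ w) (hyu : y ≠ u) (hyw : y ≠ w) (huw : u ≠ w)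
    (axy : G.Adj x y) (auw : G.Adj u w) (nxu : ¬ G.Adj x u) (nyw : ¬ G.Adj y w) :
    ∃ (G' : SimpleGraph (Fin n)) (_ : DecidableRel G'.Adj),
      (∀ i, G'.degree i = G.degree i) ∧ ¬ G'.Adj x y := by
  classical
  set A : Fin n → Fin n → Prop := fun a b =>
    ((a = x ∧ b = u) ∨ (a = u ∧ b = x) ∨ (a = y ∧ b = w) ∨ (a = w ∧ b = y)) ∨
    (G.Adj a b ∧ ¬((a = x ∧ b = y) ∨ (a = y ∧ b = x) ∨ (a = u ∧ b = w) ∨ (a = w ∧ b = u)))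
    with hA
  have hsymm : ∀ a b, A a b → A b a := by
    intro a b h
    rcases h with (h | h | h | h) | ⟨h1, h2⟩
    · exact Or.inl (Or.inr (Or.inl ⟨h.2, h.1⟩))
    · exact Or.inl (Or.inl ⟨h.2, h.1⟩)
    · exact Or.inl (Or.inr (Or.inr (Or.inr ⟨h.2, h.1⟩)))
    · exact Or.inl (Or.inr (Or.inr (Or.inl ⟨h.2, h.1⟩)))
    · exact Or.inr ⟨h1.symm, by tauto⟩
  have hirr : ∀ a, ¬ A a a := by
    intro a h
    rcases h with (h | h | h | h) | ⟨h1, _⟩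
    · exact hxu (h.1.symm.trans h.2)
    · exact hxu (h.2.symm.trans h.1)
    · exact hyw (h.1.symm.trans h.2)
    · exact hyw (h.2.symm.trans h.1)
    · exact G.loopless.irrefl a h1
  let G' : SimpleGraph (Fin n) :=
    { Adj := A
      symm := ⟨hsymm⟩
      loopless := ⟨hirr⟩ }
  have hadj : ∀ a b, G'.Adj a b ↔ A a b := fun _ _ => Iff.rfl
  haveI dG' : DecidableRel G'.Adj := Classical.decRel _
  refine ⟨G', dG', ?_, ?_⟩
  · -- degrees
    intro i
    have hxy' : G.Adj y x := axy.symm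
    have hwu : G.Adj w u := auw.symm
    have nux : ¬ G.Adj u x := fun h => nxu h.symm
    have nwy : ¬ G.Adj w y := fun h => nyw h.symm
    rw [SimpleGraph.degree, SimpleGraph.degree]
    by_cases hix : i = x
    · subst hix
      have : G'.neighborFinset i = insert u ((G.neighborFinset i).erase y) := by
        ext b
        simp only [SimpleGraph.mem_neighborFinset, hadj, hA, Finset.mem_insert,
          Finset.mem_erase]
        constructor
        · rintro ((h | h | h | h) | ⟨h1, h2⟩) <;> tauto
        · rintro (rfl | ⟨hby, hb⟩)
          · tauto
          · exact Or.inr ⟨hb, by rintro (⟨h1, h2⟩ | ⟨h1, h2⟩ | ⟨h1, h2⟩ | ⟨h1, h2⟩) <;> subst_vars <;> tauto⟩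
      rw [this, Finset.card_insert_of_notMem, Finset.card_erase_of_mem]
      · have hy : y ∈ G.neighborFinset i := by simpa using axy
        have : 1 ≤ (G.neighborFinset i).card := Finset.card_pos.2 ⟨y, hy⟩
        omega
      · simpa using axy
      · simp only [Finset.mem_erase, SimpleGraph.mem_neighborFinset]
        tauto
    · by_cases hiy : i = y
      · subst hiy
        have : G'.neighborFinset i = insert w ((G.neighborFinset i).erase x) := by
          ext b
          simp only [SimpleGraph.mem_neighborFinset, hadj, hA, Finset.mem_insert,
            Finset.mem_erase]
          constructor
          · rintro ((h | h | h | h) | ⟨h1, h2⟩) <;> tauto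
          · rintro (rfl | ⟨hbx, hb⟩)
            · tauto
            · exact Or.inr ⟨hb, by rintro (⟨h1, h2⟩ | ⟨h1, h2⟩ | ⟨h1, h2⟩ | ⟨h1, h2⟩) <;> subst_vars <;> tauto⟩
        rw [this, Finset.card_insert_of_notMem, Finset.card_erase_of_mem]
        · have hx : x ∈ G.neighborFinset i := by simpa using hxy'
          have : 1 ≤ (G.neighborFinset i).card := Finset.card_pos.2 ⟨x, hx⟩
          omega
        · simpa using hxy'
        · simp only [Finset.mem_erase, SimpleGraph.mem_neighborFinset]
          tauto
      · by_cases hiu : i = u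
        · subst hiu
          have : G'.neighborFinset i = insert x ((G.neighborFinset i).erase w) := by
            ext b
            simp only [SimpleGraph.mem_neighborFinset, hadj, hA, Finset.mem_insert,
              Finset.mem_erase]
            constructor
            · rintro ((h | h | h | h) | ⟨h1, h2⟩) <;> tauto
            · rintro (rfl | ⟨hbw, hb⟩)
              · tauto
              · exact Or.inr ⟨hb, by rintro (⟨h1, h2⟩ | ⟨h1, h2⟩ | ⟨h1, h2⟩ | ⟨h1, h2⟩) <;> subst_vars <;> tauto⟩
          rw [this, Finset.card_insert_of_notMem, Finset.card_erase_of_mem]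
          · have hw : w ∈ G.neighborFinset i := by simpa using auw
            have : 1 ≤ (G.neighborFinset i).card := Finset.card_pos.2 ⟨w, hw⟩
            omega
          · simpa using auw
          · simp only [Finset.mem_erase, SimpleGraph.mem_neighborFinset]
            tauto
        · by_cases hiw : i = w
          · subst hiw
            have : G'.neighborFinset i = insert y ((G.neighborFinset i).erase u) := by
              ext b
              simp only [SimpleGraph.mem_neighborFinset, hadj, hA, Finset.mem_insert,
                Finset.mem_erase]
              constructor
              · rintro ((h | h | h | h) | ⟨h1, h2⟩) <;> tauto
              · rintro (rfl | ⟨hbu, hb⟩)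
                · tauto
                · exact Or.inr ⟨hb, by rintro (⟨h1, h2⟩ | ⟨h1, h2⟩ | ⟨h1, h2⟩ | ⟨h1, h2⟩) <;> subst_vars <;> tauto⟩
            rw [this, Finset.card_insert_of_notMem, Finset.card_erase_of_mem]
            · have hu : u ∈ G.neighborFinset i := by simpa using hwu
              have : 1 ≤ (G.neighborFinset i).card := Finset.card_pos.2 ⟨u, hu⟩
              omega
            · simpa using hwu
            · simp only [Finset.mem_erase, SimpleGraph.mem_neighborFinset]
              tauto
          · have : G'.neighborFinset i = G.neighborFinset i := by
              ext b
              simp only [SimpleGraph.mem_neighborFinset, hadj, hA]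
              constructor
              · rintro ((h | h | h | h) | ⟨h1, h2⟩) <;> tauto
              · intro hb
                exact Or.inr ⟨hb, by rintro (⟨h1, h2⟩ | ⟨h1, h2⟩ | ⟨h1, h2⟩ | ⟨h1, h2⟩) <;> subst_vars <;> tauto⟩
            rw [this]
  · intro hcon
    rcases (hadj x y).1 hcon with (⟨h1, h2⟩ | ⟨h1, h2⟩ | ⟨h1, h2⟩ | ⟨h1, h2⟩) | ⟨h1, h2⟩
    · exact hyu h2
    · exact hxu h1
    · exact hxy h1
    · exact hxw h1
    · exact h2 (Or.inl ⟨rfl, rfl⟩)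

/-- Adding an edge between two nonadjacent vertices raises exactly their degrees by 1. -/
lemma addEdge_lemma (G : SimpleGraph (Fin n)) [inst : DecidableRel G.Adj]
    (x y : Fin n) (hxy : x ≠ y) (nxy : ¬ G.Adj x y) :
    ∃ (G' : SimpleGraph (Fin n)) (_ : DecidableRel G'.Adj),
      ∀ i, G'.degree i = G.degree i + (if i = x ∨ i = y then 1 else 0) := by
  classical
  set A : Fin n → Fin n → Prop := fun a b =>
    (a = x ∧ b = y) ∨ (a = y ∧ b = x) ∨ G.Adj a b with hA
  have hsymm : ∀ a b, A a b → A b a := by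
    intro a b h
    rcases h with h | h | h
    · exact Or.inr (Or.inl ⟨h.2, h.1⟩)
    · exact Or.inl ⟨h.2, h.1⟩
    · exact Or.inr (Or.inr h.symm)
  have hirr : ∀ a, ¬ A a a := by
    intro a h
    rcases h with h | h | h
    · exact hxy (h.1.symm.trans h.2)
    · exact hxy (h.2.symm.trans h.1)
    · exact G.loopless.irrefl a h
  let G' : SimpleGraph (Fin n) := { Adj := A, symm := ⟨hsymm⟩, loopless := ⟨hirr⟩ }
  have hadj : ∀ a b, G'.Adj a b ↔ A a b := fun _ _ => Iff.rfl
  haveI dG' : DecidableRel G'.Adj := Classical.decRel _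
  refine ⟨G', dG', ?_⟩
  intro i
  have nyx : ¬ G.Adj y x := fun h => nxy h.symm
  rw [SimpleGraph.degree, SimpleGraph.degree]
  by_cases hix : i = x
  · subst hix
    have : G'.neighborFinset i = insert y (G.neighborFinset i) := by
      ext b
      simp only [SimpleGraph.mem_neighborFinset, hadj, hA, Finset.mem_insert]
      constructor
      · rintro (⟨h1, h2⟩ | ⟨h1, h2⟩ | h) <;> subst_vars <;> tauto
      · rintro (rfl | hb) <;> tauto
    rw [this, Finset.card_insert_of_notMem (by simpa using nxy)]
    simp
  · by_cases hiy : i = y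
    · subst hiy
      have : G'.neighborFinset i = insert x (G.neighborFinset i) := by
        ext b
        simp only [SimpleGraph.mem_neighborFinset, hadj, hA, Finset.mem_insert]
        constructor
        · rintro (⟨h1, h2⟩ | ⟨h1, h2⟩ | h) <;> subst_vars <;> tauto
        · rintro (rfl | hb) <;> tauto
      rw [this, Finset.card_insert_of_notMem (by simpa using nyx)]
      simp [hix]
    · have : G'.neighborFinset i = G.neighborFinset i := by
        ext b
        simp only [SimpleGraph.mem_neighborFinset, hadj, hA]
        constructor
        · rintro (⟨h1, h2⟩ | ⟨h1, h2⟩ | h) <;> subst_vars <;> tauto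
        · intro hb; tauto
      rw [this]
      simp [hix, hiy]

/-- If `e` is graphic and `x` has small enough degree compared with a set of
high-degree candidates, then `e` has a realization in which `x` and `y` are nonadjacent. -/
lemma nonadj_realization (e : Fin n → ℕ) (x y : Fin n) (hxy : x ≠ y)
    (A : Finset (Fin n)) (hA : ∀ u ∈ A, u ≠ x ∧ u ≠ y ∧ e y ≤ e u)
    (hcard : e x ≤ A.card) (hg : IsGraphic e) :
    ∃ (G : SimpleGraph (Fin n)) (_ : DecidableRel G.Adj),
      (∀ i, G.degree i = e i) ∧ ¬ G.Adj x y := by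
  classical
  obtain ⟨G, dG, hdeg⟩ := hg
  by_cases haxy : G.Adj x y
  · -- find u ∈ A nonadjacent to x
    have hAx : ¬ (A ⊆ (G.neighborFinset x).erase y) := by
      intro hsub
      have h1 : A.card ≤ ((G.neighborFinset x).erase y).card := Finset.card_le_card hsub
      have h2 : ((G.neighborFinset x).erase y).card = (G.neighborFinset x).card - 1 :=
        Finset.card_erase_of_mem (by simpa using haxy)
      have h3 : (G.neighborFinset x).card = e x := hdeg x
      have h4 : 1 ≤ (G.neighborFinset x).card :=
        Finset.card_pos.2 ⟨y, by simpa using haxy⟩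
      omega
    obtain ⟨u, huA, hux⟩ := Finset.not_subset.1 hAx
    obtain ⟨hux', huy, huey⟩ := hA u huA
    have nxu : ¬ G.Adj x u := by
      intro h
      exact hux (Finset.mem_erase.2 ⟨huy, by simpa using h⟩)
    have nux : ¬ G.Adj u x := fun h => nxu h.symm
    have hayx : G.Adj y x := haxy.symm
    -- find w ∈ N(u) \ {x,y} with w ∉ N(y)
    set P : Finset (Fin n) := (G.neighborFinset u).erase y with hP
    set Q : Finset (Fin n) := ((G.neighborFinset y).erase x).erase u with hQ
    have hcardP : Q.card < P.card := by
      have hyu : (y ∈ G.neighborFinset u) ↔ (u ∈ G.neighborFinset y) := by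
        simp only [SimpleGraph.mem_neighborFinset]
        exact ⟨fun h => h.symm, fun h => h.symm⟩
      have hPc : P.card = (G.neighborFinset u).card - (if y ∈ G.neighborFinset u then 1 else 0) := by
        by_cases hm : y ∈ G.neighborFinset u
        · simp [hP, Finset.card_erase_of_mem hm, hm]
        · simp [hP, Finset.erase_eq_of_notMem hm, hm]
      have hQc : Q.card = (G.neighborFinset y).card - 1 - (if u ∈ G.neighborFinset y then 1 else 0) := by
        have hxmem : x ∈ (G.neighborFinset y) := by simpa using hayx
        by_cases hm : u ∈ G.neighborFinset y
        · have hm' : u ∈ (G.neighborFinset y).erase x := Finset.mem_erase.2 ⟨hux', hm⟩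
          simp [hQ, Finset.card_erase_of_mem hm', Finset.card_erase_of_mem hxmem, hm]
        · have hm' : u ∉ (G.neighborFinset y).erase x := fun hc => hm (Finset.mem_erase.1 hc).2
          simp [hQ, Finset.erase_eq_of_notMem hm', Finset.card_erase_of_mem hxmem, hm]
      have hdu : (G.neighborFinset u).card = e u := hdeg u
      have hdy : (G.neighborFinset y).card = e y := hdeg y
      by_cases hm : u ∈ G.neighborFinset y
      · have h2 : ({x, u} : Finset (Fin n)) ⊆ G.neighborFinset y := by
          intro z hz
          rcases Finset.mem_insert.1 hz with rfl | hz
          · simpa using hayx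
          · rcases Finset.mem_singleton.1 hz with rfl
            exact hm
        have h3 : ({x, u} : Finset (Fin n)).card = 2 := by
          rw [Finset.card_insert_of_notMem (by simp only [Finset.mem_singleton]; exact fun h => hux' h.symm), Finset.card_singleton]
        have h4 : 2 ≤ e y := by
          have := Finset.card_le_card h2
          omega
        rw [hPc, hQc, hdu, hdy]
        rw [if_pos (hyu.2 hm), if_pos hm]
        omega
      · have h4 : 1 ≤ e y := by
          have : x ∈ G.neighborFinset y := by simpa using hayx
          have := Finset.card_pos.2 ⟨x, this⟩
          omega
        rw [hPc, hQc, hdu, hdy]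
        rw [if_neg (fun hc => hm (hyu.1 hc)), if_neg hm]
        omega
    have hne : ∃ w ∈ P, w ∉ Q := by
      by_contra hcon
      push_neg at hcon
      exact absurd (Finset.card_le_card hcon) (Nat.not_le.2 hcardP)
    obtain ⟨w, hwP, hwQ⟩ := hne
    have hwu' : w ∈ G.neighborFinset u := (Finset.mem_erase.1 hwP).2
    have hwy : w ≠ y := (Finset.mem_erase.1 hwP).1
    have auw : G.Adj u w := by simpa using hwu'
    have hwx : w ≠ x := by
      intro h; subst h; exact nux (by simpa using hwu')
    have hwu : w ≠ u := fun h => G.loopless.irrefl u (h ▸ auw)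
    have nyw : ¬ G.Adj y w := by
      intro h
      apply hwQ
      exact Finset.mem_erase.2 ⟨hwu, Finset.mem_erase.2 ⟨hwx, by simpa using h⟩⟩
    obtain ⟨G', dG', hdeg', hnadj⟩ := switch_lemma G x y u w hxy (Ne.symm hux') hwx.symm
      (Ne.symm huy) hwy.symm hwu.symm haxy auw nxu nyw
    exact ⟨G', dG', fun i => (hdeg' i).trans (hdeg i), hnadj⟩
  · exact ⟨G, dG, hdeg, haxy⟩


variable {n : ℕ}

/-- ℕ-indexed version. -/
def Dof {n : ℕ} (d : Fin n → ℕ) : ℕ → ℕ := fun i => if h : i < n then d ⟨i, h⟩ else 0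

def EGn (n : ℕ) (D : ℕ → ℕ) (k : ℕ) : Prop :=
  ∑ i ∈ range k, D i ≤ k * (k - 1) + ∑ i ∈ Ico k n, min k (D i)

lemma Dof_val (d : Fin n → ℕ) (i : Fin n) : Dof d i = d i := by
  simp [Dof, i.isLt]

lemma sum_filter_val (g : Fin n → ℕ) (P : ℕ → Prop) [DecidablePred P] :
    ∑ i ∈ univ.filter (fun i : Fin n => P i.val), g i
      = ∑ i ∈ (range n).filter P, Dof g i := by
  rw [Finset.sum_filter, Finset.sum_filter]
  rw [← Fin.sum_univ_eq_sum_range (fun j => if P j then Dof g j else 0) n]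
  exact Finset.sum_congr rfl (fun i _ => by simp [Dof_val])

lemma filter_lt_range (k : ℕ) : (range n).filter (fun i => i < k) = range (min k n) := by
  ext i; simp; omega

lemma filter_le_range (k : ℕ) : (range n).filter (fun i => k ≤ i) = Ico (min k n) n := by
  ext i; simp; omega

lemma sum_univ_eq (d : Fin n → ℕ) : ∑ i, d i = ∑ i ∈ range n, Dof d i := by
  rw [← Fin.sum_univ_eq_sum_range (Dof d) n]
  exact Finset.sum_congr rfl (fun i _ => (Dof_val d i).symm)

lemma EG_iff (d : Fin n → ℕ) (k : ℕ) (hk : k ≤ n) :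
    ErdosGallaiIneq d k ↔ EGn n (Dof d) k := by
  classical
  unfold ErdosGallaiIneq EGn
  rw [sum_filter_val d (fun i => i < k), sum_filter_val (fun i => min k (d i)) (fun i => k ≤ i),
    filter_lt_range, filter_le_range, Nat.min_eq_left hk]
  have : ∑ i ∈ Ico k n, Dof (fun i => min k (d i)) i = ∑ i ∈ Ico k n, min k (Dof d i) := by
    refine Finset.sum_congr rfl (fun i hi => ?_)
    have hin : i < n := (Finset.mem_Ico.1 hi).2
    simp [Dof, hin]
  rw [this]

section Choudum
variable {n : ℕ} {D : ℕ → ℕ} {istar t : ℕ}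

/-- Choudum's key step: decrementing the last maximal entry before `t` and the
entry at `t` preserves all Erdős–Gallai inequalities. -/
lemma choudum_EG
    (hmono : ∀ a b : ℕ, a ≤ b → D b ≤ D a)
    (ht1 : 1 ≤ t) (htn : t < n) (hDt : 1 ≤ D t) (hzero : ∀ i, t < i → D i = 0)
    (hist : istar < t) (hconst : ∀ i, i ≤ istar → D i = D 0)
    (hd0t : D 0 ≤ t)
    (heven : Even (∑ i ∈ range n, D i))
    (hEG : ∀ k, k ≤ n → EGn n D k)
    (k : ℕ) (hk : k ≤ n) :
    EGn n (fun i => if i = istar ∨ i = t then D i - 1 else D i) k := by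
  set E : ℕ → ℕ := fun i => if i = istar ∨ i = t then D i - 1 else D i with hE
  have hD0 : 1 ≤ D 0 := le_trans hDt (hmono 0 t (Nat.zero_le t))
  have hDist : D istar = D 0 := hconst istar le_rfl
  have hEist : E istar = D 0 - 1 := by simp [hE, hDist]
  have hEt : E t = D t - 1 := by simp [hE]
  have hnet : istar ≠ t := Nat.ne_of_lt hist
  have hEother : ∀ i, i ≠ istar → i ≠ t → E i = D i := by
    intro i h1 h2; simp [hE, h1, h2]
  have hEGk := hEG k hk
  rcases Nat.eq_zero_or_pos k with rfl | hk1
  · simp [EGn]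
  by_cases hkt : t < k
  · -- case (i): both decremented entries are on the left
    have hLE : (∑ i ∈ range k, E i) + 2 = ∑ i ∈ range k, D i := by
      have h1 : istar ∈ range k := by simp; omega
      have h2 : t ∈ (range k).erase istar := by simp [Finset.mem_erase]; omega
      rw [← Finset.add_sum_erase _ E h1, ← Finset.add_sum_erase _ D h1,
        ← Finset.add_sum_erase _ E h2, ← Finset.add_sum_erase _ D h2]
      have heq : ∑ i ∈ ((range k).erase istar).erase t, E i
          = ∑ i ∈ ((range k).erase istar).erase t, D i := by
        refine Finset.sum_congr rfl (fun i hi => ?_)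
        have h3 := Finset.mem_erase.1 hi
        have h4 := Finset.mem_erase.1 h3.2
        exact hEother i h4.1 h3.1
      rw [heq, hEist, hEt]
      omega
    have hRE : ∑ i ∈ Ico k n, min k (E i) = ∑ i ∈ Ico k n, min k (D i) := by
      refine Finset.sum_congr rfl (fun i hi => ?_)
      have h3 := Finset.mem_Ico.1 hi
      rw [hEother i (by omega) (by omega)]
    unfold EGn at hEGk ⊢
    rw [hRE]
    omega
  · push_neg at hkt
    by_cases hki : istar < k
    · -- case (ii): istar on the left, t on the right
      have hLE : (∑ i ∈ range k, E i) + 1 = ∑ i ∈ range k, D i := by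
        have h1 : istar ∈ range k := by simp; omega
        rw [← Finset.add_sum_erase _ E h1, ← Finset.add_sum_erase _ D h1]
        have heq : ∑ i ∈ (range k).erase istar, E i = ∑ i ∈ (range k).erase istar, D i := by
          refine Finset.sum_congr rfl (fun i hi => ?_)
          have h3 := Finset.mem_erase.1 hi
          have h4 : i < k := by simpa using h3.2
          exact hEother i h3.1 (by omega)
        rw [heq, hEist]
        omega
      have hRE : ∑ i ∈ Ico k n, min k (D i) ≤ (∑ i ∈ Ico k n, min k (E i)) + 1 := by
        have h1 : t ∈ Ico k n := by simp [Finset.mem_Ico]; omega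
        rw [← Finset.add_sum_erase _ (fun i => min k (D i)) h1,
          ← Finset.add_sum_erase _ (fun i => min k (E i)) h1]
        have heq : ∑ i ∈ (Ico k n).erase t, min k (E i)
            = ∑ i ∈ (Ico k n).erase t, min k (D i) := by
          refine Finset.sum_congr rfl (fun i hi => ?_)
          have h3 := Finset.mem_erase.1 hi
          have h4 := Finset.mem_Ico.1 h3.2
          rw [hEother i (by omega) h3.1]
        rw [heq, hEt]
        omega
      unfold EGn at hEGk ⊢
      omega
    · -- case (iii): k ≤ istar, the left part is all equal to D 0
      push_neg at hki
      have hLE : ∑ i ∈ range k, E i = k * D 0 := by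
        rw [Finset.sum_congr rfl (fun i hi => ?_), Finset.sum_const, Finset.card_range,
          smul_eq_mul]
        have h3 : i < k := by simpa using hi
        rw [hEother i (by omega) (by omega), hconst i (by omega)]
      have hLD : ∑ i ∈ range k, D i = k * D 0 := by
        rw [Finset.sum_congr rfl (fun i hi => ?_), Finset.sum_const, Finset.card_range,
          smul_eq_mul]
        have h3 : i < k := by simpa using hi
        rw [hconst i (by omega)]
      unfold EGn at hEGk ⊢
      rw [hLE]
      rw [hLD] at hEGk
      by_cases hbig : D 0 ≤ k
      · -- small head values: min is the identity on the tail
        have hEsmall : ∀ i, E i ≤ D 0 := by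
          intro i
          have : D i ≤ D 0 := hmono 0 i (Nat.zero_le i)
          simp only [hE]
          split <;> omega
        have hRE : ∑ i ∈ Ico k n, min k (E i) = ∑ i ∈ Ico k n, E i := by
          refine Finset.sum_congr rfl (fun i _ => ?_)
          have := hEsmall i
          omega
        rw [hRE]
        rcases Nat.lt_or_ge (D 0) k with hlt | hge
        · -- D 0 ≤ k - 1 : trivial
          have : k * D 0 ≤ k * (k - 1) := Nat.mul_le_mul_left k (by omega)
          omega
        · -- D 0 = k
          have hD0k : D 0 = k := le_antisymm hbig hge
          have hsplit : ∑ i ∈ Ico k n, E i + 2 = ∑ i ∈ Ico k n, D i := by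
            have h1 : istar ∈ Ico k n := by simp [Finset.mem_Ico]; omega
            have h2 : t ∈ (Ico k n).erase istar := by
              simp [Finset.mem_erase, Finset.mem_Ico]; omega
            rw [← Finset.add_sum_erase _ E h1, ← Finset.add_sum_erase _ D h1,
              ← Finset.add_sum_erase _ E h2, ← Finset.add_sum_erase _ D h2]
            have heq : ∑ i ∈ ((Ico k n).erase istar).erase t, E i
                = ∑ i ∈ ((Ico k n).erase istar).erase t, D i := by
              refine Finset.sum_congr rfl (fun i hi => ?_)
              have h3 := Finset.mem_erase.1 hi
              have h4 := Finset.mem_erase.1 h3.2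
              exact hEother i h4.1 h3.1
            rw [heq, hEist, hEt]
            omega
          -- split the D-sum at istar + 1
          have hsplit2 : ∑ i ∈ Ico k n, D i
              = (istar + 1 - k) * k + ∑ i ∈ Ico (istar + 1) n, D i := by
            rw [← Finset.sum_Ico_consecutive _ (by omega : k ≤ istar + 1) (by omega : istar + 1 ≤ n)]
            congr 1
            rw [Finset.sum_congr rfl (fun i hi => ?_), Finset.sum_const, Nat.card_Ico,
              smul_eq_mul]
            have h3 := Finset.mem_Ico.1 hi
            rw [hconst i (by omega), hD0k]
          have hR1 : D t ≤ ∑ i ∈ Ico (istar + 1) n, D i := by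
            refine Finset.single_le_sum (fun i _ => Nat.zero_le _) ?_
            simp [Finset.mem_Ico]; omega
          rcases Nat.lt_or_ge k istar with hki2 | hki2
          · -- istar ≥ k + 1 : enough slack
            have hgoal' : k * D 0 = k * (k - 1) + k := by
              obtain ⟨m, hm⟩ : ∃ m, k = m + 1 := ⟨k - 1, by omega⟩
              subst hm
              rw [hD0k]
              simp only [Nat.succ_sub_one]
              ring
            have : (istar + 1 - k) * k ≥ 2 * k := Nat.mul_le_mul_right k (by omega)
            omega
          · -- istar = k : parity argument
            have histk : istar = k := by omega
            have hTot : ∑ i ∈ range n, D i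
                = (istar + 1) * k + ∑ i ∈ Ico (istar + 1) n, D i := by
              rw [← Finset.sum_range_add_sum_Ico _ (by omega : istar + 1 ≤ n)]
              congr 1
              rw [Finset.sum_congr rfl (fun i hi => ?_), Finset.sum_const, Finset.card_range,
                smul_eq_mul]
              have h3 : i < istar + 1 := by simpa using hi
              rw [hconst i (by omega), hD0k]
            have heven2 : Even ((istar + 1) * k) := by
              rw [histk, Nat.mul_comm]
              exact Nat.even_mul_succ_self k
            have hevenR : Even (∑ i ∈ Ico (istar + 1) n, D i) := by
              rw [hTot] at heven
              exact (Nat.even_add.1 heven).1 heven2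
            obtain ⟨m, hm⟩ := hevenR
            have hgoal' : k * D 0 = k * (k - 1) + k := by
              obtain ⟨m', hm'⟩ : ∃ m', k = m' + 1 := ⟨k - 1, by omega⟩
              subst hm'
              rw [hD0k]
              simp only [Nat.succ_sub_one]
              ring
            have h10 : (istar + 1 - k) * k = k := by
              rw [histk, Nat.add_sub_cancel_left, one_mul]
            have hm2 : ∑ i ∈ Ico (istar + 1) n, D i ≥ 2 := by omega
            omega
      · -- D 0 ≥ k + 1
        push_neg at hbig
        by_cases hDtk : k + 1 ≤ D t
        · -- case (A): every entry in [k, t] is ≥ k, so the RHS sum is (t+1-k)*k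
          have hRE : ∑ i ∈ Ico k n, min k (E i) = (t + 1 - k) * k := by
            rw [← Finset.sum_Ico_consecutive _ (by omega : k ≤ t + 1) (by omega : t + 1 ≤ n)]
            have hz : ∑ i ∈ Ico (t + 1) n, min k (E i) = 0 := by
              refine Finset.sum_eq_zero (fun i hi => ?_)
              have h3 := Finset.mem_Ico.1 hi
              rw [hEother i (by omega) (by omega), hzero i (by omega)]
              simp
            have hc : ∑ i ∈ Ico k (t + 1), min k (E i) = (t + 1 - k) * k := by
              rw [Finset.sum_congr rfl (fun i hi => ?_), Finset.sum_const, Nat.card_Ico,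
                smul_eq_mul]
              have h3 := Finset.mem_Ico.1 hi
              have h4 : k ≤ E i := by
                rcases eq_or_ne i istar with rfl | h5
                · rw [hEist]; omega
                · rcases eq_or_ne i t with rfl | h6
                  · rw [hEt]; omega
                  · rw [hEother i h5 h6]
                    have := hmono i t (by omega)
                    omega
              omega
            omega
          rw [hRE]
          have hkey : k * (k - 1) + (t + 1 - k) * k = k * t := by
            obtain ⟨m, rfl⟩ : ∃ m, k = m + 1 := ⟨k - 1, by omega⟩
            obtain ⟨c, rfl⟩ : ∃ c, t = (m + 1) + c := ⟨t - (m + 1), by omega⟩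
            have e5 : m + 1 + c + 1 - (m + 1) = c + 1 := by omega
            rw [e5, Nat.succ_sub_one]
            ring
          rw [hkey]
          exact Nat.mul_le_mul_left k hd0t
        · -- case (B): D t ≤ k; tightness chain using EG at k+1
          push_neg at hDtk
          set S := ∑ i ∈ Ico (istar + 1) n, min k (D i) with hS
          have hsplitRD : ∑ i ∈ Ico k n, min k (D i) = (istar + 1 - k) * k + S := by
            rw [← Finset.sum_Ico_consecutive _ (by omega : k ≤ istar + 1)
              (by omega : istar + 1 ≤ n)]
            congr 1
            rw [Finset.sum_congr rfl (fun i hi => ?_), Finset.sum_const, Nat.card_Ico,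
              smul_eq_mul]
            have h3 := Finset.mem_Ico.1 hi
            rw [hconst i (by omega)]
            omega
          have hRE : ∑ i ∈ Ico k n, min k (D i) ≤ (∑ i ∈ Ico k n, min k (E i)) + 1 := by
            have h1 : t ∈ Ico k n := by simp [Finset.mem_Ico]; omega
            rw [← Finset.add_sum_erase _ (fun i => min k (D i)) h1,
              ← Finset.add_sum_erase _ (fun i => min k (E i)) h1]
            have heq : ∑ i ∈ (Ico k n).erase t, min k (E i)
                = ∑ i ∈ (Ico k n).erase t, min k (D i) := by
              refine Finset.sum_congr rfl (fun i hi => ?_)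
              have h3 := Finset.mem_erase.1 hi
              rcases eq_or_ne i istar with rfl | h5
              · rw [hEist, hDist]
                omega
              · rw [hEother i h5 h3.1]
            rw [heq, hEt]
            omega
          by_contra hfail
          push_neg at hfail
          have htight : k * D 0 = k * (k - 1) + (istar + 1 - k) * k + S := by
            rw [hsplitRD] at hEGk
            omega
          have hk1n : k + 1 ≤ n := by omega
          have hEGk1 := hEG (k + 1) hk1n
          unfold EGn at hEGk1
          have hLD1 : ∑ i ∈ range (k + 1), D i = (k + 1) * D 0 := by
            rw [Finset.sum_congr rfl (fun i hi => ?_), Finset.sum_const, Finset.card_range,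
          smul_eq_mul]
            have h3 : i < k + 1 := by simpa using hi
            rw [hconst i (by omega)]
          set S' := ∑ i ∈ Ico (istar + 1) n, min (k + 1) (D i) with hS'
          have hsplitRD1 : ∑ i ∈ Ico (k + 1) n, min (k + 1) (D i)
              = (istar + 1 - (k + 1)) * (k + 1) + S' := by
            rw [← Finset.sum_Ico_consecutive _ (by omega : k + 1 ≤ istar + 1)
              (by omega : istar + 1 ≤ n)]
            congr 1
            rw [Finset.sum_congr rfl (fun i hi => ?_), Finset.sum_const, Nat.card_Ico,
              smul_eq_mul]
            have h3 := Finset.mem_Ico.1 hi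
            rw [hconst i (by omega)]
            omega
          rw [hLD1, hsplitRD1] at hEGk1
          set cset := (Ico (istar + 1) n).filter (fun i => k + 1 ≤ D i) with hcset
          set c := cset.card with hc
          have hS'S : S' ≤ S + c := by
            rw [hS', hS, hc, hcset, Finset.card_filter, ← Finset.sum_add_distrib]
            refine Finset.sum_le_sum (fun i _ => ?_)
            split <;> omega
          have hSc : k * c + 1 ≤ S := by
            have hsub : insert t cset ⊆ Ico (istar + 1) n := by
              intro z hz
              rcases Finset.mem_insert.1 hz with rfl | hz
              · simp [Finset.mem_Ico]; omega
              · exact Finset.mem_of_mem_filter z hz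
            have htc : t ∉ cset := by
              simp only [hcset, Finset.mem_filter]
              rintro ⟨-, h⟩
              omega
            have h1 : ∑ i ∈ insert t cset, min k (D i) ≤ S := by
              rw [hS]
              exact Finset.sum_le_sum_of_subset hsub
            rw [Finset.sum_insert htc] at h1
            have h2 : ∑ i ∈ cset, min k (D i) = k * c := by
              rw [Finset.sum_congr rfl (fun i hi => ?_), Finset.sum_const, smul_eq_mul,
                Nat.mul_comm]
              have h3 := (Finset.mem_filter.1 hi).2
              omega
            have h4 : 1 ≤ min k (D t) := by omega
            omega
          -- clean up subtractions and finish
          obtain ⟨m, rfl⟩ : ∃ m, k = m + 1 := ⟨k - 1, by omega⟩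
          obtain ⟨a, ha⟩ : ∃ a, istar = m + 1 + a := ⟨istar - (m + 1), by omega⟩
          obtain ⟨b, hb⟩ : ∃ b, D 0 = m + 2 + b := ⟨D 0 - (m + 2), by omega⟩
          have e1 : m + 1 - 1 = m := by omega
          have e2 : istar + 1 - (m + 1) = a + 1 := by omega
          have e3 : istar + 1 - (m + 1 + 1) = a := by omega
          have e4 : m + 1 + 1 - 1 = m + 1 := by omega
          rw [hb, e1, e2] at htight
          rw [hb, e3, e4] at hEGk1
          have h5 : b + 1 ≤ a + c := by linarith only [htight, hEGk1, hS'S]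
          have h6 := Nat.mul_le_mul_left (m + 1) h5
          linarith only [htight, hSc, h6]
end Choudum


lemma card_filter_val {n : ℕ} (P : ℕ → Prop) [DecidablePred P] :
    (univ.filter (fun i : Fin n => P i.val)).card = ((range n).filter P).card := by
  apply Finset.card_bij (fun (a : Fin n) _ => a.val)
  · intro a ha
    simp only [Finset.mem_filter, Finset.mem_range]
    exact ⟨a.isLt, (Finset.mem_filter.1 ha).2⟩
  · intro a _ b _ h
    exact Fin.val_injective h
  · intro b hb
    obtain ⟨hb1, hb2⟩ := Finset.mem_filter.1 hb
    exact ⟨⟨b, Finset.mem_range.1 hb1⟩, by simp [hb2], rfl⟩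

theorem eg_sufficient_s17 : ∀ (s n : ℕ) (d : Fin n → ℕ), (∑ i, d i) = s →
    (∀ i j : Fin n, i ≤ j → d j ≤ d i) → Even (∑ i, d i) →
    (∀ k, k ≤ n → ErdosGallaiIneq d k) → IsGraphic d := by
  intro s
  induction s using Nat.strong_induction_on with
  | _ s IH =>
    intro n d hsum hmono heven hEG
    classical
    by_cases hall : ∀ i : Fin n, d i = 0
    · exact ⟨⊥, by infer_instance, fun i => by rw [SimpleGraph.bot_degree, hall i]⟩
    push_neg at hall
    obtain ⟨i0, hi0⟩ := hall
    have hn : 0 < n := i0.pos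
    set D := Dof d with hD
    have hDd : ∀ i : Fin n, D i = d i := Dof_val d
    have hDval : ∀ (j : ℕ) (hj : j < n), D j = d ⟨j, hj⟩ := by
      intro j hj; simp [hD, Dof, hj]
    have hDbig : ∀ j, n ≤ j → D j = 0 := by
      intro j hj; simp [hD, Dof, Nat.not_lt.2 hj]
    have hDmono : ∀ a b : ℕ, a ≤ b → D b ≤ D a := by
      intro a b hab
      by_cases hb : b < n
      · have ha : a < n := lt_of_le_of_lt hab hb
        rw [hDval a ha, hDval b hb]
        exact hmono _ _ (by exact Fin.mk_le_mk.2 hab)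
      · rw [hDbig b (by omega)]
        exact Nat.zero_le _
    have hD0 : 1 ≤ D 0 := by
      have h1 : D i0.val ≤ D 0 := hDmono 0 i0.val (Nat.zero_le _)
      have h2 : D i0.val = d i0 := by rw [hDval i0.val i0.isLt]
      omega
    have hEGn : ∀ k, k ≤ n → EGn n D k := fun k hk => (EG_iff d k hk).1 (hEG k hk)
    -- the last positive entry t
    set T := (range n).filter (fun i => 1 ≤ D i) with hT
    have hT0 : 0 ∈ T := by simp [hT, hn, hD0]
    set t := T.max' ⟨0, hT0⟩ with ht
    have htT : t ∈ T := Finset.max'_mem _ _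
    have htn : t < n := by
      have := (Finset.mem_filter.1 htT).1
      simpa using this
    have hDt : 1 ≤ D t := (Finset.mem_filter.1 htT).2
    have hzero : ∀ i, t < i → D i = 0 := by
      intro i hti
      by_cases hi : i < n
      · by_contra hcon
        have : i ∈ T := by simp [hT, hi]; omega
        have := Finset.le_max' T i this
        omega
      · exact hDbig i (by omega)
    have ht1 : 1 ≤ t := by
      by_contra hcon
      have ht0 : t = 0 := by omega
      have h1 := hEGn 1 (by omega)
      unfold EGn at h1
      rw [Finset.sum_range_one] at h1
      have h2 : ∑ i ∈ Ico 1 n, min 1 (D i) = 0 := by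
        refine Finset.sum_eq_zero (fun i hi => ?_)
        have h3 := Finset.mem_Ico.1 hi
        rw [hzero i (by omega)]
        simp
      rw [h2] at h1
      omega
    have hd0t : D 0 ≤ t := by
      have h1 := hEGn 1 (by omega)
      unfold EGn at h1
      rw [Finset.sum_range_one] at h1
      have hsplit : ∑ i ∈ Ico 1 n, min 1 (D i)
          = ∑ i ∈ Ico 1 (t + 1), min 1 (D i) + ∑ i ∈ Ico (t + 1) n, min 1 (D i) := by
        rw [Finset.sum_Ico_consecutive _ (by omega : 1 ≤ t + 1) (by omega : t + 1 ≤ n)]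
      have h2 : ∑ i ∈ Ico (t + 1) n, min 1 (D i) = 0 := by
        refine Finset.sum_eq_zero (fun i hi => ?_)
        have h3 := Finset.mem_Ico.1 hi
        rw [hzero i (by omega)]
        simp
      have h3 : ∑ i ∈ Ico 1 (t + 1), min 1 (D i) ≤ t := by
        calc ∑ i ∈ Ico 1 (t + 1), min 1 (D i) ≤ ∑ _i ∈ Ico 1 (t + 1), 1 :=
              Finset.sum_le_sum (fun i _ => by omega)
          _ = t := by rw [Finset.sum_const, Nat.card_Ico, smul_eq_mul]; omega
      omega
    -- the last occurrence of the maximal value before t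
    set Smax := (range t).filter (fun i => D i = D 0) with hSmax
    have hS0 : 0 ∈ Smax := by simp [hSmax]; omega
    set istar := Smax.max' ⟨0, hS0⟩ with histar
    have histS : istar ∈ Smax := Finset.max'_mem _ _
    have hist : istar < t := by
      have := (Finset.mem_filter.1 histS).1
      simpa using this
    have hDist : D istar = D 0 := (Finset.mem_filter.1 histS).2
    have hconst : ∀ i, i ≤ istar → D i = D 0 := by
      intro i hi
      have h1 : D i ≤ D 0 := hDmono 0 i (Nat.zero_le _)
      have h2 : D istar ≤ D i := hDmono i istar hi
      omega
    have hmax : ∀ i, istar < i → i < t → D i < D 0 := by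
      intro i h1 h2
      by_contra hcon
      have h3 : D i ≤ D 0 := hDmono 0 i (Nat.zero_le _)
      have h4 : i ∈ Smax := by simp [hSmax]; omega
      have := Finset.le_max' Smax i h4
      omega
    -- the decremented sequence
    set e : Fin n → ℕ := fun i => if (i : ℕ) = istar ∨ (i : ℕ) = t then d i - 1 else d i
      with he
    set Efun : ℕ → ℕ := fun i => if i = istar ∨ i = t then D i - 1 else D i with hEfun
    have hDofe : Dof e = Efun := by
      funext j
      by_cases hj : j < n
      · simp only [Dof, hj, dif_pos, he, hEfun]
        rw [hDval j hj]
      · have hjistar : j ≠ istar := by omega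
        have hjt : j ≠ t := by omega
        simp only [Dof, hj, dif_neg, not_false_iff, hEfun, hjistar, hjt, or_self, if_false]
        rw [hDbig j (by omega)]
    have hEt : Efun t = D t - 1 := by simp [hEfun]
    have hEist : Efun istar = D 0 - 1 := by simp [hEfun, hDist]
    have hEother : ∀ i, i ≠ istar → i ≠ t → Efun i = D i := by
      intro i h1 h2; simp [hEfun, h1, h2]
    have hEle : ∀ i, Efun i ≤ D i := by
      intro i; simp only [hEfun]; split <;> omega
    have hEmono : ∀ a b : ℕ, a ≤ b → Efun b ≤ Efun a := by
      intro a b hab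
      rcases eq_or_lt_of_le hab with rfl | hlt
      · exact le_rfl
      by_cases hbt : t < b
      · rw [hEother b (by omega) (by omega), hzero b hbt]
        exact Nat.zero_le _
      push_neg at hbt
      by_cases hai : a = istar
      · subst hai
        rw [hEist]
        by_cases hbt' : b = t
        · subst hbt'
          rw [hEt]
          have := hDmono 0 t (Nat.zero_le _)
          omega
        · rw [hEother b (by omega) hbt']
          have := hmax b hlt (by omega)
          omega
      · by_cases hat : a = t
        · omega
        · rw [hEother a hai hat]
          have h1 := hEle b
          have h2 := hDmono a b hab
          omega
    have hemono : ∀ i j : Fin n, i ≤ j → e j ≤ e i := by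
      intro i j hij
      have h1 : e i = Efun i.val := by rw [← hDofe]; simp [Dof, i.isLt]
      have h2 : e j = Efun j.val := by rw [← hDofe]; simp [Dof, j.isLt]
      rw [h1, h2]
      exact hEmono i.val j.val hij
    -- sum bookkeeping
    have hsumD : ∑ i ∈ range n, D i = s := by rw [← hsum, sum_univ_eq]
    have hsplitsum : ∀ f : ℕ → ℕ, ∑ i ∈ range n, f i
        = f istar + (f t + ∑ i ∈ ((range n).erase istar).erase t, f i) := by
      intro f
      have h1 : istar ∈ range n := by simp; omega
      have h2 : t ∈ (range n).erase istar := by simp [Finset.mem_erase]; omega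
      rw [← Finset.add_sum_erase _ f h1, ← Finset.add_sum_erase _ f h2]
    have hsum_e : (∑ i ∈ range n, Efun i) + 2 = s := by
      rw [hsplitsum Efun, hEist, hEt]
      rw [← hsumD, hsplitsum D]
      have heq : ∑ i ∈ ((range n).erase istar).erase t, Efun i
          = ∑ i ∈ ((range n).erase istar).erase t, D i := by
        refine Finset.sum_congr rfl (fun i hi => ?_)
        have h3 := Finset.mem_erase.1 hi
        have h4 := Finset.mem_erase.1 h3.2
        exact hEother i h4.1 h3.1
      rw [heq, hDist]
      omega
    have hs2 : 2 ≤ s := by omega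
    have hsum_e' : ∑ i, e i = s - 2 := by
      rw [sum_univ_eq, hDofe]
      omega
    obtain ⟨mm, hmm⟩ := heven
    -- apply the induction hypothesis to e
    have hge : IsGraphic e := by
      apply IH (s - 2) (by omega) n e hsum_e' hemono
      · rw [hsum_e']
        exact ⟨mm - 1, by omega⟩
      · intro k hk
        rw [EG_iff e k hk, hDofe]
        exact choudum_EG hDmono ht1 htn hDt hzero hist hconst hd0t
          (by rw [hsumD]; exact ⟨mm, by omega⟩) hEGn k hk
    -- realize e with istar ≁ t, then add the missing edge back
    set istar' : Fin n := ⟨istar, by omega⟩ with histar'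
    set t' : Fin n := ⟨t, htn⟩ with ht'
    have hne : istar' ≠ t' := by
      intro hcon
      have : istar = t := congrArg Fin.val hcon
      omega
    set A := (univ.filter (fun u : Fin n => (u : ℕ) < t ∧ (u : ℕ) ≠ istar)) with hA
    have hAcard : A.card = t - 1 := by
      rw [hA, card_filter_val (fun i => i < t ∧ i ≠ istar)]
      have heqs : (range n).filter (fun i => i < t ∧ i ≠ istar) = (range t).erase istar := by
        ext i
        simp only [Finset.mem_filter, Finset.mem_range, Finset.mem_erase]
        omega
      rw [heqs, Finset.card_erase_of_mem (by simpa using hist), Finset.card_range]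
    have heval : ∀ i : Fin n, e i = Efun i.val := by
      intro i; rw [← hDofe]; simp [Dof, i.isLt]
    have hAprop : ∀ u ∈ A, u ≠ istar' ∧ u ≠ t' ∧ e t' ≤ e u := by
      intro u hu
      obtain ⟨-, hu1, hu2⟩ := Finset.mem_filter.1 hu
      refine ⟨?_, ?_, ?_⟩
      · intro hcon; exact hu2 (congrArg Fin.val hcon)
      · intro hcon
        have : (u : ℕ) = t := congrArg Fin.val hcon
        omega
      · rw [heval, heval]
        have h1 : (t' : Fin n).val = t := rfl
        have h2 : Efun t'.val = D t - 1 := by rw [h1, hEt]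
        rw [h2, hEother u.val hu2 (by omega)]
        have := hDmono u.val t (by omega)
        omega
    have hcard : e istar' ≤ A.card := by
      rw [heval, hAcard]
      have : Efun istar'.val = D 0 - 1 := by
        have h1 : (istar' : Fin n).val = istar := rfl
        rw [h1, hEist]
      omega
    obtain ⟨G, dG, hdegG, hnadj⟩ := nonadj_realization e istar' t' hne A hAprop hcard hge
    obtain ⟨G2, dG2, hdeg2⟩ := addEdge_lemma G istar' t' hne hnadj
    refine ⟨G2, dG2, fun i => ?_⟩
    rw [hdeg2 i, hdegG i]
    by_cases h1 : i = istar'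
    · subst h1
      rw [if_pos (show istar' = istar' ∨ istar' = t' from Or.inl rfl)]
      rw [heval istar']
      have hv : (istar' : ℕ) = istar := rfl
      rw [hv, hEist]
      have h6 : D istar = d istar' := hDval istar (by omega)
      omega
    · by_cases h2 : i = t'
      · subst h2
        rw [if_pos (show t' = istar' ∨ t' = t' from Or.inr rfl)]
        rw [heval t']
        have hv : (t' : ℕ) = t := rfl
        rw [hv, hEt]
        have h6 : D t = d t' := hDval t htn
        omega
      · rw [if_neg (show ¬(i = istar' ∨ i = t') by tauto)]
        have h3 : (i : ℕ) ≠ istar := fun hcon => h1 (Fin.ext hcon)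
        have h4 : (i : ℕ) ≠ t := fun hcon => h2 (Fin.ext hcon)
        rw [heval i, hEother i.val h3 h4, hDval i.val i.isLt]
        simp

/-- For the extremal sequence (`p` copies of `a1`, one `β`, then copies of `an`),
if the Erdős–Gallai inequalities hold at `k = p` and `k = p + 1`, then the
sequence is graphic. -/
theorem stmt_17 (n p a1 β an : ℕ) (hp : p + 1 ≤ n)
    (h1 : an ≤ β) (h2 : β ≤ a1) (hcap : a1 + 1 ≤ n)
    (α : Fin n → ℕ)
    (hdef : α = fun i : Fin n => if (i : ℕ) < p then a1 else if (i : ℕ) = p then β else an)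
    (heven : Even (∑ i, α i))
    (hEGp : ErdosGallaiIneq α p) (hEGp1 : ErdosGallaiIneq α (p + 1)) :
    IsGraphic α := by
  classical
  subst hdef
  set α : Fin n → ℕ := fun i : Fin n =>
    if (i : ℕ) < p then a1 else if (i : ℕ) = p then β else an with hα
  set D := Dof α with hD
  have hDval : ∀ (j : ℕ), j < n → D j = if j < p then a1 else if j = p then β else an := by
    intro j hj
    simp [hD, Dof, hj, hα]
  have hmono' : ∀ i j : Fin n, i ≤ j → α j ≤ α i := by
    intro i j hij
    have hij' : (i : ℕ) ≤ (j : ℕ) := hij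
    simp only [hα]
    split_ifs <;> omega
  -- closed forms for the sums
  have hL : ∀ k, k ≤ p → ∑ i ∈ range k, D i = k * a1 := by
    intro k hk
    rw [Finset.sum_congr rfl (fun i hi => ?_), Finset.sum_const, Finset.card_range, smul_eq_mul]
    have h3 : i < k := by simpa using hi
    rw [hDval i (by omega), if_pos (by omega)]
  have hRle : ∀ k, k ≤ p → ∑ i ∈ Ico k n, min k (D i)
      = (p - k) * min k a1 + (min k β + (n - p - 1) * min k an) := by
    intro k hk
    rw [← Finset.sum_Ico_consecutive _ (show k ≤ p by omega) (show p ≤ n by omega)]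
    rw [← Finset.sum_Ico_consecutive _ (show p ≤ p + 1 by omega) (show p + 1 ≤ n by omega)]
    congr 1
    · rw [Finset.sum_congr rfl (fun i hi => ?_), Finset.sum_const, Nat.card_Ico, smul_eq_mul]
      have h3 := Finset.mem_Ico.1 hi
      rw [hDval i (by omega), if_pos (by omega)]
    congr 1
    · have : Ico p (p + 1) = {p} := by
        ext i
        rw [Finset.mem_Ico, Finset.mem_singleton]
        omega
      rw [this, Finset.sum_singleton, hDval p (by omega), if_neg (by omega), if_pos rfl]
    · have hcongr : ∑ i ∈ Ico (p + 1) n, min k (D i) = ∑ _i ∈ Ico (p + 1) n, min k an :=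
        Finset.sum_congr rfl (fun i hi => by
          have h3 := Finset.mem_Ico.1 hi
          rw [hDval i (by omega), if_neg (by omega), if_neg (by omega)])
      rw [hcongr, Finset.sum_const, Nat.card_Ico, smul_eq_mul]
      congr 1 <;> omega
  have hLge : ∀ k, p + 1 ≤ k → k ≤ n → ∑ i ∈ range k, D i
      = p * a1 + β + (k - p - 1) * an := by
    intro k hk1 hk2
    rw [← Finset.sum_range_add_sum_Ico _ (show p + 1 ≤ k by omega)]
    rw [← Finset.sum_range_add_sum_Ico _ (show p ≤ p + 1 by omega)]
    congr 1
    · congr 1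
      · rw [Finset.sum_congr rfl (fun i hi => ?_), Finset.sum_const, Finset.card_range,
          smul_eq_mul]
        have h3 : i < p := by simpa using hi
        rw [hDval i (by omega), if_pos (by omega)]
      · have : Ico p (p + 1) = {p} := by
          ext i
          rw [Finset.mem_Ico, Finset.mem_singleton]
          omega
        rw [this, Finset.sum_singleton, hDval p (by omega), if_neg (by omega), if_pos rfl]
    · have hcongr : ∑ i ∈ Ico (p + 1) k, D i = ∑ _i ∈ Ico (p + 1) k, an :=
        Finset.sum_congr rfl (fun i hi => by
          have h3 := Finset.mem_Ico.1 hi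
          rw [hDval i (by omega), if_neg (by omega), if_neg (by omega)])
      rw [hcongr, Finset.sum_const, Nat.card_Ico, smul_eq_mul]
      congr 1 <;> omega
  have hRge : ∀ k, p + 1 ≤ k → ∑ i ∈ Ico k n, min k (D i) = (n - k) * min k an := by
    intro k hk1
    rw [Finset.sum_congr rfl (fun i hi => ?_), Finset.sum_const, Nat.card_Ico, smul_eq_mul]
    have h3 := Finset.mem_Ico.1 hi
    rw [hDval i (by omega), if_neg (by omega), if_neg (by omega)]
  -- EG at p and p + 1, in EGn form
  have hEGnp : EGn n D p := (EG_iff _ p (by omega)).1 hEGp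
  have hEGnp1 : EGn n D (p + 1) := (EG_iff _ (p + 1) (by omega)).1 hEGp1
  -- EG for all k ≤ p
  have hEGlow : ∀ k, k ≤ p → EGn n D k := by
    intro k hk
    rcases Nat.eq_or_lt_of_le hk with rfl | hklt
    · exact hEGnp
    rcases Nat.eq_zero_or_pos k with rfl | hk1
    · simp [EGn]
    unfold EGn
    rw [hL k (by omega), hRle k (by omega)]
    by_cases hA : a1 ≤ k
    · -- small maximum: trivial
      have hmin1 : min k a1 = a1 := by omega
      have hx : (k - 1) * a1 ≤ (k - 1) * k := Nat.mul_le_mul_left _ hA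
      have hy : k * a1 = (k - 1) * a1 + a1 := by
        zify [hk1]
        ring
      have hz : k * (k - 1) = (k - 1) * k := Nat.mul_comm _ _
      have hw : 1 * min k a1 ≤ (p - k) * min k a1 := Nat.mul_le_mul_right _ (by omega)
      omega
    push_neg at hA
    by_cases hC : k ≤ an
    · -- all entries at least k
      have hm1 : min k a1 = k := by omega
      have hm2 : min k β = k := by omega
      have hm3 : min k an = k := by omega
      rw [hm1, hm2, hm3]
      have hid : k * (k - 1) + ((p - k) * k + (k + (n - p - 1) * k)) = k * (n - 1) := by
        zify [hk1, (show k ≤ p by omega), (show 1 ≤ n by omega), (show p ≤ n by omega),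
          (show 1 ≤ n - p by omega)]
        ring
      rw [hid]
      exact Nat.mul_le_mul_left _ (by omega)
    push_neg at hC
    have hm1 : min k a1 = k := by omega
    have hm3 : min k an = an := by omega
    rw [hm1, hm3]
    by_cases hDc : a1 ≤ p - 1
    · -- a1 < p : trivial again
      have hid : k * (k - 1) + (p - k) * k = k * (p - 1) := by
        zify [hk1, (show k ≤ p by omega), (show 1 ≤ p by omega)]
        ring
      have hx : k * a1 ≤ k * (p - 1) := Nat.mul_le_mul_left _ hDc
      omega
    · -- a1 ≥ p : use EG at p
      push_neg at hDc
      have hPa : p ≤ a1 := by omega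
      unfold EGn at hEGnp
      rw [hL p le_rfl, hRle p le_rfl] at hEGnp
      have hm4 : min p an = an := by omega
      rw [hm4, Nat.sub_self, Nat.zero_mul] at hEGnp
      -- hEGnp : p * a1 ≤ p * (p - 1) + (0 + (min p β + (n - p - 1) * an))
      have f1 : min p β ≤ min k β + (p - k) := by omega
      have f2 : (p - k) * p ≤ (p - k) * a1 := Nat.mul_le_mul_left _ hPa
      have f3 : (p - k) * a1 + k * a1 = p * a1 := by
        zify [(show k ≤ p by omega)]
        ring
      have f4 : k * (p - 1) = k * (k - 1) + (p - k) * k := by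
        zify [hk1, (show k ≤ p by omega), (show 1 ≤ p by omega)]
        ring
      have f5 : p * (p - 1) + (p - k) = k * (p - 1) + (p - k) * p := by
        zify [(show k ≤ p by omega), (show 1 ≤ p by omega)]
        ring
      omega
  -- EG for all k ≥ p + 1 by upward induction
  have hEGhigh : ∀ j, p + 1 + j ≤ n → EGn n D (p + 1 + j) := by
    intro j
    induction j with
    | zero => intro _; exact hEGnp1
    | succ m IHm =>
      intro hjn
      have hk := IHm (by omega)
      set k := p + 1 + m with hkdef
      have hkn : k + 1 ≤ n := by omega
      have hgoal : p + 1 + (m + 1) = k + 1 := by omega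
      rw [hgoal]
      unfold EGn at hk ⊢
      rw [hLge k (by omega) (by omega), hRge k (by omega)] at hk
      rw [hLge (k + 1) (by omega) (by omega), hRge (k + 1) (by omega)]
      have hLs : (k + 1 - p - 1) * an = (k - p - 1) * an + an := by
        have hc : k + 1 - p - 1 = (k - p - 1) + 1 := by omega
        rw [hc, Nat.succ_mul]
      rw [hLs]
      by_cases hcase : an ≤ k
      · have hm1 : min k an = an := by omega
        have hm2 : min (k + 1) an = an := by omega
        rw [hm2]
        rw [hm1] at hk
        have hid : (n - k) * an = (n - (k + 1)) * an + an := by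
          have hc : n - k = (n - (k + 1)) + 1 := by omega
          rw [hc, Nat.succ_mul]
        have he1 : (k + 1) * (k + 1 - 1) = (k + 1) * k := by
          rw [Nat.add_sub_cancel]
        rw [he1]
        have he2 : (k + 1) * k = k * (k - 1) + 2 * k := by
          zify [(show 1 ≤ k by omega)]
          ring
        omega
      · push_neg at hcase
        have hm1 : min k an = k := by omega
        have hm2 : min (k + 1) an = k + 1 := by omega
        rw [hm2]
        rw [hm1] at hk
        have hanlt : an ≤ n - 1 := by omega
        have hid : (k + 1) * k + (n - (k + 1)) * (k + 1)
            = k * (k - 1) + (n - k) * k + (n - 1) := by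
          zify [(show k + 1 ≤ n by omega), (show k ≤ n by omega), (show 1 ≤ n by omega),
            (show 1 ≤ k by omega)]
          ring
        have he1 : (k + 1) * (k + 1 - 1) = (k + 1) * k := by
          rw [Nat.add_sub_cancel]
        rw [he1]
        omega
  have hEGall : ∀ k, k ≤ n → ErdosGallaiIneq α k := by
    intro k hkn
    rw [EG_iff _ k hkn]
    by_cases hk : k ≤ p
    · exact hEGlow k hk
    · push_neg at hk
      have : k = p + 1 + (k - p - 1) := by omega
      rw [this]
      exact hEGhigh (k - p - 1) (by omega)
  exact eg_sufficient_s17 (∑ i, α i) n α rfl hmono' heven hEGall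
end
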